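/- arXiv:2411.09987 — 2 statements merged into one kernel-verified Lean document; each statement's English description precedes it below -/
import Mathlib

section
/- Let M be a simple connected matroid of rank d+1 ≥ 3 with two different Cremona bases b and b*. The number of connected components of the support graph G_b(b*) equals |b ∩ b*|. -/
open Set

variable {α : Type*}

/-- The set of non-basis elements on the line through `x` and `y`. -/
def Fij (M : Matroid α) (x y : α) : Set α := M.closure {x, y} \ {x, y}

/-- `b` is a Cremona basis: a base of `M` such that the sets
`Fij = cl{bᵢ,bⱼ} \ {bᵢ,bⱼ}` are pairwise disjoint with union `M.E \ b`. -/
def IsCremonaBasis (M : Matroid α) (b : Set α) : Prop :=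
  M.IsBase b ∧
  (∀ x ∈ b, ∀ y ∈ b, ∀ x' ∈ b, ∀ y' ∈ b, x ≠ y → x' ≠ y' →
    ({x, y} : Set α) ≠ {x', y'} → Disjoint (Fij M x y) (Fij M x' y')) ∧
  (⋃ x ∈ b, ⋃ y ∈ b, ⋃ _ : x ≠ y, Fij M x y) = M.E \ b

/-- The `b`-support of a set `S`. -/
def suppb (M : Matroid α) (b S : Set α) : Set α :=
  (b ∩ S) ∪ ⋃ x ∈ b, ⋃ y ∈ b, ⋃ _ : x ≠ y, ⋃ _ : (S ∩ Fij M x y).Nonempty, ({x, y} : Set α)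

/-- Adjacency in the support graph `G_b(S)`: there is an edge between `x` and `y`
for each element of `S ∩ Fij M x y`. -/
def Adjb (M : Matroid α) (b S : Set α) (x y : α) : Prop :=
  x ∈ b ∧ y ∈ b ∧ x ≠ y ∧ (S ∩ Fij M x y).Nonempty

/-- The support graph `G_b(S)` is connected. -/
def SuppConnected (M : Matroid α) (b S : Set α) : Prop :=
  ∀ x ∈ suppb M b S, ∀ y ∈ suppb M b S, Relation.ReflTransGen (Adjb M b S) x y

/-- The vertex set of the connected component of `x` in the support graph `G_b(S)`. -/
def compOf (M : Matroid α) (b S : Set α) (x : α) : Set α :=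
  {y ∈ suppb M b S | Relation.ReflTransGen (Adjb M b S) x y}

/-- A matroid is simple if every pair of (not necessarily distinct) elements
of the ground set is independent. -/
def MSimple (M : Matroid α) : Prop := ∀ e ∈ M.E, ∀ f ∈ M.E, M.Indep {e, f}

/-- A circuit: a minimal dependent set. -/
def MCircuit (M : Matroid α) (C : Set α) : Prop :=
  C ⊆ M.E ∧ ¬ M.Indep C ∧ ∀ x ∈ C, M.Indep (C \ {x})

/-- A matroid is connected if its ground set is nonempty and every two distinct
elements lie on a common circuit. -/
def MConnected (M : Matroid α) : Prop :=
  M.E.Nonempty ∧ ∀ e ∈ M.E, ∀ f ∈ M.E, e = f ∨ ∃ C, MCircuit M C ∧ e ∈ C ∧ f ∈ C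

/-- The rank of a set in a matroid: the supremum of cardinalities of independent subsets. -/
noncomputable def mRank (M : Matroid α) (X : Set α) : ℕ :=
  sSup {n | ∃ I, M.Indep I ∧ I ⊆ X ∧ I.ncard = n}


section Aux

variable {M : Matroid α} {I J X Y A B V W : Set α} {e f x y z : α}

lemma mRank_bddAbove (hfin : M.E.Finite) (X : Set α) :
    BddAbove {n | ∃ I, M.Indep I ∧ I ⊆ X ∧ I.ncard = n} := by
  refine ⟨M.E.ncard, ?_⟩
  rintro n ⟨I, hI, -, rfl⟩
  exact Set.ncard_le_ncard hI.subset_ground hfin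

lemma mRank_eq_of_basis (hfin : M.E.Finite) (hJ : M.IsBasis J X) : mRank M X = J.ncard := by
  refine le_antisymm (csSup_le ⟨0, ∅, M.empty_indep, empty_subset _, by simp⟩ ?_)
    (le_csSup (mRank_bddAbove hfin X) ⟨J, hJ.indep, hJ.subset, rfl⟩)
  rintro n ⟨I, hI, hIX, rfl⟩
  obtain ⟨J', hJ', hIJ'⟩ := hI.subset_isBasis_of_subset hIX hJ.subset_ground
  have h1 : I.ncard ≤ J'.ncard :=
    Set.ncard_le_ncard hIJ' (hfin.subset hJ'.indep.subset_ground)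
  have h2 : J'.ncard = J.ncard := by
    rw [Set.ncard_def, hJ'.encard_eq_encard hJ, ← Set.ncard_def]
  omega

lemma mRank_indep (hfin : M.E.Finite) (hI : M.Indep I) : mRank M I = I.ncard :=
  mRank_eq_of_basis hfin hI.isBasis_self

lemma mRank_closure (hfin : M.E.Finite) (X : Set α) (hX : X ⊆ M.E) :
    mRank M (M.closure X) = mRank M X := by
  obtain ⟨J, hJ⟩ := M.exists_isBasis X hX
  rw [mRank_eq_of_basis hfin hJ.isBasis_closure_right, mRank_eq_of_basis hfin hJ]

lemma mRank_mono (hfin : M.E.Finite) (hXY : X ⊆ Y) : mRank M X ≤ mRank M Y := by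
  refine csSup_le_csSup (mRank_bddAbove hfin Y) ⟨0, ∅, M.empty_indep, empty_subset _, by simp⟩ ?_
  rintro n ⟨I, hI, hIX, rfl⟩
  exact ⟨I, hI, hIX.trans hXY, rfl⟩

lemma ncard_le_mRank (hfin : M.E.Finite) (hI : M.Indep I) (hIX : I ⊆ X) :
    I.ncard ≤ mRank M X :=
  le_csSup (mRank_bddAbove hfin X) ⟨I, hI, hIX, rfl⟩

lemma mRank_le_ncard (hfin : M.E.Finite) (X : Set α) (hX : X ⊆ M.E) :
    mRank M X ≤ X.ncard := by
  obtain ⟨J, hJ⟩ := M.exists_isBasis X hX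
  rw [mRank_eq_of_basis hfin hJ]
  exact Set.ncard_le_ncard hJ.subset (hfin.subset hX)

lemma indep_of_mRank_eq (hfin : M.E.Finite) (hX : X ⊆ M.E)
    (h : X.ncard ≤ mRank M X) : M.Indep X := by
  obtain ⟨J, hJ⟩ := M.exists_isBasis X hX
  rw [mRank_eq_of_basis hfin hJ] at h
  have := Set.eq_of_subset_of_ncard_le hJ.subset h (hfin.subset hX)
  exact this ▸ hJ.indep

lemma mRank_submod (hfin : M.E.Finite) (hX : X ⊆ M.E) (hY : Y ⊆ M.E) :
    mRank M (X ∩ Y) + mRank M (X ∪ Y) ≤ mRank M X + mRank M Y := by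
  obtain ⟨I, hI⟩ := M.exists_isBasis (X ∩ Y) (inter_subset_left.trans hX)
  obtain ⟨J, hJ, hIJ⟩ := hI.indep.subset_isBasis_of_subset
    (hI.subset.trans (inter_subset_left.trans subset_union_left)) (union_subset hX hY)
  have hJfin : J.Finite := hfin.subset hJ.indep.subset_ground
  have h1 : (J ∩ X).ncard ≤ mRank M X :=
    ncard_le_mRank hfin (hJ.indep.subset inter_subset_left) inter_subset_right
  have h2 : (J ∩ Y).ncard ≤ mRank M Y :=
    ncard_le_mRank hfin (hJ.indep.subset inter_subset_left) inter_subset_right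
  have key : ((J ∩ X) ∪ (J ∩ Y)).ncard + ((J ∩ X) ∩ (J ∩ Y)).ncard
      = (J ∩ X).ncard + (J ∩ Y).ncard :=
    Set.ncard_union_add_ncard_inter _ _ (hJfin.inter_of_left X) (hJfin.inter_of_left Y)
  have hU : (J ∩ X) ∪ (J ∩ Y) = J := by
    rw [← inter_union_distrib_left]; exact inter_eq_self_of_subset_left hJ.subset
  have hI' : I ⊆ (J ∩ X) ∩ (J ∩ Y) := by
    rw [← inter_inter_distrib_left]
    exact subset_inter hIJ hI.subset
  have h3 : mRank M (X ∩ Y) ≤ ((J ∩ X) ∩ (J ∩ Y)).ncard := by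
    rw [mRank_eq_of_basis hfin hI]
    exact Set.ncard_le_ncard hI' (hJfin.subset (inter_subset_left.trans inter_subset_left))
  have h4 : mRank M (X ∪ Y) = J.ncard := mRank_eq_of_basis hfin hJ
  rw [hU] at key
  omega

end Aux
section Aux2

variable {M : Matroid α} {I A B P Q V W X Y : Set α} {e f x y z a : α}

lemma simple_closure_empty (hs : MSimple M) : M.closure (∅ : Set α) = ∅ := by
  ext x
  simp only [mem_empty_iff_false, iff_false]
  intro hx
  have hxE := M.closure_subset_ground ∅ hx
  have h1 : M.Indep {x} := by
    have := hs x hxE x hxE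
    simpa [Set.pair_eq_singleton] using this
  have h2 := h1.notMem_closure_diff_of_mem (mem_singleton x)
  rw [Set.diff_self] at h2
  exact h2 hx

lemma simple_not_mem_closure_singleton (hs : MSimple M) (he : e ∈ M.E) (hf : f ∈ M.E)
    (hne : e ≠ f) : e ∉ M.closure {f} := by
  have h := (hs e he f hf).notMem_closure_diff_of_mem (mem_insert e {f})
  have hd : ({e, f} : Set α) \ {e} = {f} := by
    ext w
    simp only [mem_diff, mem_insert_iff, mem_singleton_iff]
    constructor
    · rintro ⟨rfl | rfl, h2⟩
      · simp at h2
      · rfl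
    · rintro rfl
      exact ⟨Or.inr rfl, hne.symm⟩
  rwa [hd] at h

lemma exists_minimal_closure_subset (hA : A.Finite) (hx : x ∈ M.closure A) :
    ∃ A₀, A₀ ⊆ A ∧ x ∈ M.closure A₀ ∧ ∀ a ∈ A₀, x ∉ M.closure (A₀ \ {a}) := by
  obtain ⟨n, hn⟩ : ∃ n, A.ncard = n := ⟨_, rfl⟩
  induction n using Nat.strong_induction_on generalizing A with
  | _ n IH =>
    by_cases h : ∀ a ∈ A, x ∉ M.closure (A \ {a})
    · exact ⟨A, Subset.rfl, hx, h⟩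
    · push_neg at h
      obtain ⟨a, haA, hxa⟩ := h
      subst hn
      obtain ⟨A₀, h1, h2, h3⟩ := IH ((A \ {a}).ncard)
        (Set.ncard_diff_singleton_lt_of_mem haA hA) (hA.subset diff_subset) hxa rfl
      exact ⟨A₀, h1.trans diff_subset, h2, h3⟩

lemma closure_inter_closure (hfin : M.E.Finite) (hI : M.Indep I) (hA : A ⊆ I) (hB : B ⊆ I) :
    M.closure A ∩ M.closure B = M.closure (A ∩ B) := by
  apply Subset.antisymm
  · rintro x ⟨hxA, hxB⟩
    have hIfin : I.Finite := hfin.subset hI.subset_ground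
    obtain ⟨A₀, hA₀A, hxA₀, hA₀min⟩ := exists_minimal_closure_subset (hIfin.subset hA) hxA
    have hkey : A₀ ⊆ B := by
      intro a haP
      by_contra haQ
      have h1 : x ∈ M.closure (insert a (A₀ \ {a})) \ M.closure (A₀ \ {a}) := by
        refine ⟨?_, hA₀min a haP⟩
        rwa [Set.insert_diff_singleton, Set.insert_eq_of_mem haP]
      have h2 := Matroid.closure_exchange h1
      have hBE : B ⊆ M.E := hB.trans hI.subset_ground
      have hP'E : A₀ \ {a} ⊆ M.E := (diff_subset.trans (hA₀A.trans hA)).trans hI.subset_ground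
      have h3 : insert x (A₀ \ {a}) ⊆ M.closure (B ∪ (A₀ \ {a})) := by
        intro w hw
        rcases hw with rfl | hw
        · exact M.closure_subset_closure subset_union_left hxB
        · exact M.subset_closure _ (union_subset hBE hP'E) (Or.inr hw)
      have h4 : a ∈ M.closure (B ∪ (A₀ \ {a})) :=
        M.closure_subset_closure_of_subset_closure h3 h2.1
      have h5 : B ∪ (A₀ \ {a}) ⊆ I \ {a} := by
        intro w hw
        rcases hw with hw | hw
        · exact ⟨hB hw, fun h => haQ (h ▸ hw)⟩
        · exact ⟨hA (hA₀A hw.1), hw.2⟩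
      exact hI.notMem_closure_diff_of_mem (hA (hA₀A haP))
        (M.closure_subset_closure h5 h4)
    exact M.closure_subset_closure (subset_inter hA₀A hkey) hxA₀
  · exact subset_inter (M.closure_subset_closure inter_subset_left)
      (M.closure_subset_closure inter_subset_right)

lemma mRank_union_of_skew (hfin : M.E.Finite) (hVW : M.Indep (V ∪ W))
    (hdj : Disjoint V W) (hX : X ⊆ M.closure V) (hY : Y ⊆ M.closure W) :
    mRank M (X ∪ Y) = mRank M X + mRank M Y := by
  set A := M.closure V with hAdef
  set B := M.closure W with hBdef
  have hVE : V ⊆ M.E := subset_union_left.trans hVW.subset_ground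
  have hWE : W ⊆ M.E := subset_union_right.trans hVW.subset_ground
  have hAE : A ⊆ M.E := M.closure_subset_ground V
  have hBE : B ⊆ M.E := M.closure_subset_ground W
  have hXE : X ⊆ M.E := hX.trans hAE
  have hYE : Y ⊆ M.E := hY.trans hBE
  have hXA : X ⊆ A := hX
  have hYB : Y ⊆ B := hY
  have hrA : mRank M A = V.ncard := by
    rw [hAdef, mRank_closure hfin V hVE, mRank_indep hfin (hVW.subset subset_union_left)]
  have hrB : mRank M B = W.ncard := by
    rw [hBdef, mRank_closure hfin W hWE, mRank_indep hfin (hVW.subset subset_union_right)]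
  have hAB : mRank M (A ∪ B) = mRank M A + mRank M B := by
    refine le_antisymm ?_ ?_
    · have := mRank_submod hfin hAE hBE
      omega
    · have h1 : V.ncard + W.ncard = (V ∪ W).ncard :=
        (Set.ncard_union_eq hdj (hfin.subset hVE) (hfin.subset hWE)).symm
      have h2 : (V ∪ W).ncard = mRank M (V ∪ W) := (mRank_indep hfin hVW).symm
      have h3 : mRank M (V ∪ W) ≤ mRank M (A ∪ B) :=
        mRank_mono hfin (union_subset_union (M.subset_closure V hVE) (M.subset_closure W hWE))
      omega
  have hsub1 := mRank_submod hfin (union_subset hXE hBE) hAE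
  have he1 : (X ∪ B) ∪ A = A ∪ B := by
    rw [union_assoc, union_comm B A]
    exact union_eq_self_of_subset_left (hXA.trans subset_union_left)
  rw [he1] at hsub1
  have hm1 : mRank M X ≤ mRank M ((X ∪ B) ∩ A) :=
    mRank_mono hfin (subset_inter subset_union_left hXA)
  have hsub2 := mRank_submod hfin (union_subset hXE hYE) hBE
  have he2 : (X ∪ Y) ∪ B = X ∪ B := by
    rw [union_assoc]
    rw [union_eq_self_of_subset_left hYB]
  rw [he2] at hsub2
  have hm2 : mRank M Y ≤ mRank M ((X ∪ Y) ∩ B) :=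
    mRank_mono hfin (subset_inter subset_union_right hYB)
  have hub := mRank_submod hfin hXE hYE
  have hm3 : mRank M (X ∪ Y) ≤ mRank M X + mRank M Y := by omega
  omega

end Aux2
section Aux3

variable {M : Matroid α} {b bs V W X Y : Set α} {e f g p q s t u v x y z : α}

lemma Fij_symm : Fij M x y = Fij M y x := by rw [Fij, Fij, Set.pair_comm]

lemma Fij_subset_closure : Fij M x y ⊆ M.closure {x, y} := fun _ h => h.1

lemma Fij_subset_ground : Fij M x y ⊆ M.E :=
  Fij_subset_closure.trans (M.closure_subset_ground _)

lemma Fij_not_mem_base (hbB : M.IsBase b) (hx : x ∈ b) (hy : y ∈ b) (he : e ∈ Fij M x y) :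
    e ∉ b := by
  intro heb
  have hxy : ({x, y} : Set α) ⊆ b \ {e} := by
    intro w hw
    rcases hw with rfl | rfl
    · exact ⟨hx, fun h => he.2 (by simp [h.symm])⟩
    · exact ⟨hy, fun h => he.2 (by simp [h.symm])⟩
  exact hbB.indep.notMem_closure_diff_of_mem heb (M.closure_subset_closure hxy he.1)

lemma mem_Fij_exists (hb : IsCremonaBasis M b) (hz : z ∈ M.E) (hzb : z ∉ b) :
    ∃ p q, p ∈ b ∧ q ∈ b ∧ p ≠ q ∧ z ∈ Fij M p q := by
  have h : z ∈ M.E \ b := ⟨hz, hzb⟩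
  rw [← hb.2.2] at h
  simp only [mem_iUnion] at h
  obtain ⟨p, hp, q, hq, hpq, hzF⟩ := h
  exact ⟨p, q, hp, hq, hpq, hzF⟩

lemma Fij_pair_eq (hb : IsCremonaBasis M b) (hp : p ∈ b) (hq : q ∈ b) (hp' : u ∈ b)
    (hq' : v ∈ b) (hpq : p ≠ q) (huv : u ≠ v) (hg1 : g ∈ Fij M p q) (hg2 : g ∈ Fij M u v) :
    ({p, q} : Set α) = {u, v} := by
  by_contra hne
  exact (hb.2.1 p hp q hq u hp' v hq' hpq huv hne).ne_of_mem hg1 hg2 rfl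

lemma pair_exchange (h1 : z ∈ M.closure {e, f}) (h2 : z ∉ M.closure {f}) :
    e ∈ M.closure {z, f} :=
  (Matroid.closure_exchange ⟨h1, h2⟩).1

lemma pair_exchange' (h1 : z ∈ M.closure {e, f}) (h2 : z ∉ M.closure {e}) :
    f ∈ M.closure {z, e} := by
  rw [Set.pair_comm] at h1
  exact pair_exchange h1 h2

lemma closure_pair_subset (hu : u ∈ M.closure X) (hv : v ∈ M.closure X) :
    M.closure {u, v} ⊆ M.closure X := by
  have h : ({u, v} : Set α) ⊆ M.closure X := by
    intro w hw
    rcases hw with rfl | rfl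
    · exact hu
    · exact hv
  have := M.closure_subset_closure_of_subset_closure h
  exact this

lemma base_ncard (hfin : M.E.Finite) {n : ℕ} (hrk : mRank M M.E = n) (hbB : M.IsBase b) :
    b.ncard = n := by
  rw [← hrk, mRank_eq_of_basis hfin (Matroid.isBasis_ground_iff.mpr hbB)]

lemma Adjb_symm (h : Adjb M b bs x y) : Adjb M b bs y x := by
  obtain ⟨h1, h2, h3, h4⟩ := h
  exact ⟨h2, h1, h3.symm, by rwa [Fij_symm]⟩

lemma reach_symm (h : Relation.ReflTransGen (Adjb M b bs) x y) :
    Relation.ReflTransGen (Adjb M b bs) y x :=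
  by haveI : Std.Symm (Adjb M b bs) := ⟨fun _ _ h => Adjb_symm h⟩; exact Std.Symm.symm _ _ h

lemma suppb_subset_base : suppb M b bs ⊆ b := by
  intro w hw
  rcases hw with hw | hw
  · exact hw.1
  · simp only [mem_iUnion] at hw
    obtain ⟨p, hp, q, hq, hpq, hne, hw⟩ := hw
    rcases hw with rfl | rfl
    · exact hp
    · exact hq

lemma inter_subset_suppb : b ∩ bs ⊆ suppb M b bs := subset_union_left

lemma mem_suppb_left (hx : x ∈ b) (hy : y ∈ b) (hxy : x ≠ y)
    (hne : (bs ∩ Fij M x y).Nonempty) : x ∈ suppb M b bs := by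
  refine Or.inr ?_
  simp only [mem_iUnion]
  exact ⟨x, hx, y, hy, hxy, hne, Or.inl rfl⟩

lemma mem_suppb_right (hx : x ∈ b) (hy : y ∈ b) (hxy : x ≠ y)
    (hne : (bs ∩ Fij M x y).Nonempty) : y ∈ suppb M b bs := by
  refine Or.inr ?_
  simp only [mem_iUnion]
  exact ⟨x, hx, y, hy, hxy, hne, Or.inr rfl⟩

lemma reach_mem_closure (hsimple : MSimple M) (hbB : M.IsBase b) (hbsB : M.IsBase bs)
    (hs : s ∈ M.E) {y : α} (h : Relation.ReflTransGen (Adjb M b bs) s y) :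
    y ∈ M.closure (insert s (bs \ b)) := by
  have hXE : insert s (bs \ b) ⊆ M.E := by
    intro w hw
    rcases hw with rfl | hw
    · exact hs
    · exact hbsB.indep.subset_ground hw.1
  induction h with
  | refl => exact M.subset_closure _ hXE (mem_insert s _)
  | @tail y' z' hr hadj IH =>
    obtain ⟨hyb, hzb, hyz, g, hgbs, hgF⟩ := hadj
    have hgnb : g ∉ b := Fij_not_mem_base hbB hyb hzb hgF
    have hgE : g ∈ M.E := Fij_subset_ground hgF
    have hyE : y' ∈ M.E := hbB.indep.subset_ground hyb
    have hgy : g ≠ y' := fun h => hgnb (h ▸ hyb)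
    have hg1 : g ∈ M.closure {z', y'} := by
      rw [Set.pair_comm]; exact Fij_subset_closure hgF
    have hg2 : g ∉ M.closure {y'} := simple_not_mem_closure_singleton hsimple hgE hyE hgy
    have hz' : z' ∈ M.closure {g, y'} := pair_exchange hg1 hg2
    have hsubs : M.closure {g, y'} ⊆ M.closure (insert s (bs \ b)) :=
      closure_pair_subset (M.subset_closure _ hXE (Or.inr ⟨hgbs, hgnb⟩)) IH
    exact hsubs hz'

end Aux3
section Aux5

variable {M : Matroid α} {b bs V S X Y : Set α} {e f g p q s t u v x y z : α}

lemma simple_pair_mRank (hfin : M.E.Finite) (hsimple : MSimple M) (he : e ∈ M.E)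
    (hf : f ∈ M.E) (hef : e ≠ f) : mRank M {e, f} = 2 := by
  rw [mRank_indep hfin (hsimple e he f hf), Set.ncard_pair hef]

lemma mRank_le_two_of_subset_closure_pair (hfin : M.E.Finite) (hX : X ⊆ M.closure {e, f})
    (he : e ∈ M.E) (hf : f ∈ M.E) : mRank M X ≤ 2 := by
  have hp : ({e, f} : Set α) ⊆ M.E := by
    intro w hw; rcases hw with rfl | rfl <;> assumption
  calc mRank M X ≤ mRank M (M.closure {e, f}) := mRank_mono hfin hX
    _ = mRank M {e, f} := mRank_closure hfin _ hp
    _ ≤ ({e, f} : Set α).ncard := mRank_le_ncard hfin _ hp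
    _ ≤ 2 := by
        classical
        exact (Set.ncard_insert_le e {f}).trans (by simp)

/-- The four-point contradiction for the mixed case. -/
lemma mixed_contradiction (hfin : M.E.Finite) (hsimple : MSimple M)
    (hb : IsCremonaBasis M b) (hbs : IsCremonaBasis M bs)
    (hVb : V ⊆ b) (hSbs : S ⊆ bs) (hSnb : ∀ g ∈ S, g ∉ b)
    (hclS : M.closure S = M.closure V) (hclG : M.closure (bs \ S) = M.closure (b \ V))
    (he : e ∈ S) (hf : f ∈ bs \ S) (hznbs : z ∉ bs) (hzE : z ∈ M.E)
    (hz1 : z ∈ M.closure {e, f})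
    (hp : p ∈ V) (hq : q ∈ b \ V) (hz2 : z ∈ M.closure {p, q}) : False := by
  have hbI := hb.1.indep
  have hbsI := hbs.1.indep
  have hbE : b ⊆ M.E := hbI.subset_ground
  have hbsE : bs ⊆ M.E := hbsI.subset_ground
  have heE : e ∈ M.E := hbsE (hSbs he)
  have hfE : f ∈ M.E := hbsE hf.1
  have hpE : p ∈ M.E := hbE (hVb hp)
  have hqE : q ∈ M.E := hbE hq.1
  have henb : e ∉ b := hSnb e he
  have hef : e ≠ f := fun h => hf.2 (h ▸ he)
  have hep : e ≠ p := fun h => henb (h ▸ hVb hp)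
  have hze : z ≠ e := fun h => hznbs (h ▸ hSbs he)
  have hzf : z ≠ f := fun h => hznbs (h ▸ hf.1)
  have hpq : p ≠ q := fun h => hq.2 (h ▸ hp)
  have hzcle : z ∉ M.closure {e} := simple_not_mem_closure_singleton hsimple hzE heE hze
  have hzclf : z ∉ M.closure {f} := simple_not_mem_closure_singleton hsimple hzE hfE hzf
  have hVbV : M.Indep (V ∪ (b \ V)) := by rwa [union_diff_cancel hVb]
  have hdj : Disjoint V (b \ V) := disjoint_sdiff_right
  have hfG : f ∈ M.closure (b \ V) := by
    rw [← hclG]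
    exact M.subset_closure _ (diff_subset.trans hbsE) hf
  -- common sub-result: f ∈ M.closure {p, e} gives a contradiction
  have hfpe : f ∉ M.closure {p, e} := by
    intro hmem
    have h1 : M.closure {p, e} ⊆ M.closure S := by
      refine closure_pair_subset ?_ ?_
      · rw [hclS]; exact M.subset_closure _ (hVb.trans hbE) hp
      · exact M.subset_closure _ (hSbs.trans hbsE) he
    have h2 : f ∈ M.closure S ∩ M.closure {f} :=
      ⟨h1 hmem, M.mem_closure_self f hfE⟩
    rw [closure_inter_closure hfin hbsI hSbs (by simpa using hf.1)] at h2
    have h3 : S ∩ {f} = (∅ : Set α) := by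
      ext w; simp only [mem_inter_iff, mem_singleton_iff, mem_empty_iff_false, iff_false]
      rintro ⟨hwS, rfl⟩; exact hf.2 hwS
    rw [h3, simple_closure_empty hsimple] at h2
    exact h2
  by_cases hfq : f = q
  · -- subcase f = q
    subst hfq
    have hA : ({e, f, z} : Set α) ⊆ M.closure {e, f} := by
      intro w hw
      rcases hw with rfl | rfl | rfl
      · exact M.subset_closure _ (by intro w hw; rcases hw with rfl | rfl <;> assumption) (Or.inl rfl)
      · exact M.subset_closure _ (by intro w hw; rcases hw with rfl | rfl <;> assumption) (Or.inr rfl)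
      · exact hz1
    have hB : ({p, f, z} : Set α) ⊆ M.closure {p, f} := by
      intro w hw
      rcases hw with rfl | rfl | rfl
      · exact M.subset_closure _ (by intro w hw; rcases hw with rfl | rfl <;> assumption) (Or.inl rfl)
      · exact M.subset_closure _ (by intro w hw; rcases hw with rfl | rfl <;> assumption) (Or.inr rfl)
      · exact hz2
    have hrA : mRank M {e, f, z} ≤ 2 := mRank_le_two_of_subset_closure_pair hfin hA heE hfE
    have hrB : mRank M {p, f, z} ≤ 2 := mRank_le_two_of_subset_closure_pair hfin hB hpE hfE
    have hfz : ({f, z} : Set α) ⊆ {e, f, z} ∩ ({p, f, z}) := by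
      intro w hw
      rcases hw with rfl | rfl
      · exact ⟨Or.inr (Or.inl rfl), Or.inr (Or.inl rfl)⟩
      · exact ⟨Or.inr (Or.inr rfl), Or.inr (Or.inr rfl)⟩
    have hrfz : mRank M ({e, f, z} ∩ {p, f, z}) ≥ 2 := by
      have := simple_pair_mRank hfin hsimple hfE hzE (fun h => hzf h.symm)
      have hm := mRank_mono hfin hfz
      omega
    have hsub := mRank_submod hfin
      (show ({e,f,z} : Set α) ⊆ M.E by intro w hw; rcases hw with rfl|rfl|rfl <;> assumption)
      (show ({p,f,z} : Set α) ⊆ M.E by intro w hw; rcases hw with rfl|rfl|rfl <;> assumption)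
    have hUn : mRank M ({e, f, z} ∪ {p, f, z}) ≤ 2 := by omega
    have hefp : mRank M {e, f, p} ≤ 2 := by
      refine le_trans (mRank_mono hfin ?_) hUn
      intro w hw
      rcases hw with rfl | rfl | rfl
      · exact Or.inl (Or.inl rfl)
      · exact Or.inl (Or.inr (Or.inl rfl))
      · exact Or.inr (Or.inl rfl)
    -- hence p ∈ closure {e, f}
    have hpef : p ∈ M.closure {e, f} := by
      by_contra hpcl
      have hind : M.Indep (insert p {e, f}) := by
        rw [(hbsI.subset (by intro w hw; rcases hw with rfl | rfl; exacts [hSbs he, hf.1]) :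
            M.Indep {e, f}).insert_indep_iff_of_notMem
          (by rintro (rfl | rfl); exacts [hep rfl, hq.2 hp])]
        exact ⟨hpE, hpcl⟩
      have h3 : mRank M (insert p {e, f}) = 3 := by
        rw [mRank_indep hfin hind, Set.ncard_insert_of_notMem
          (by rintro (rfl | rfl); exacts [hep rfl, hq.2 hp]) (by
            exact (Set.finite_singleton f).insert e), Set.ncard_pair hef]
      have hins : (insert p {e, f} : Set α) = {e, f, p} := by
        ext w; simp only [mem_insert_iff, mem_singleton_iff]; tauto
      rw [hins] at h3
      omega
    have hpe : p ∉ M.closure {e} := simple_not_mem_closure_singleton hsimple hpE heE hep.symm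
    exact hfpe (pair_exchange' hpef hpe)
  · -- subcase f ≠ q : four distinct points
    have hXsub : ({e, p} : Set α) ⊆ M.closure V := by
      intro w hw
      rcases hw with rfl | rfl
      · rw [← hclS]; exact M.subset_closure _ (hSbs.trans hbsE) he
      · exact M.subset_closure _ (hVb.trans hbE) hp
    have hYsub : ({f, q} : Set α) ⊆ M.closure (b \ V) := by
      intro w hw
      rcases hw with rfl | rfl
      · exact hfG
      · exact M.subset_closure _ ((diff_subset : b \ V ⊆ b).trans hbE) hq
    have hskew := mRank_union_of_skew hfin hVbV hdj hXsub hYsub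
    rw [simple_pair_mRank hfin hsimple heE hpE hep,
        simple_pair_mRank hfin hsimple hfE hqE hfq] at hskew
    -- now the upper bound
    have hA : ({e, f, z} : Set α) ⊆ M.closure {e, f} := by
      intro w hw
      rcases hw with rfl | rfl | rfl
      · exact M.subset_closure _ (by intro w hw; rcases hw with rfl | rfl <;> assumption) (Or.inl rfl)
      · exact M.subset_closure _ (by intro w hw; rcases hw with rfl | rfl <;> assumption) (Or.inr rfl)
      · exact hz1
    have hB : ({p, q, z} : Set α) ⊆ M.closure {p, q} := by
      intro w hw
      rcases hw with rfl | rfl | rfl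
      · exact M.subset_closure _ (by intro w hw; rcases hw with rfl | rfl <;> assumption) (Or.inl rfl)
      · exact M.subset_closure _ (by intro w hw; rcases hw with rfl | rfl <;> assumption) (Or.inr rfl)
      · exact hz2
    have hrA : mRank M {e, f, z} ≤ 2 := mRank_le_two_of_subset_closure_pair hfin hA heE hfE
    have hrB : mRank M {p, q, z} ≤ 2 := mRank_le_two_of_subset_closure_pair hfin hB hpE hqE
    have hrz : mRank M ({e, f, z} ∩ {p, q, z}) ≥ 1 := by
      have h1 : ({z} : Set α) ⊆ {e, f, z} ∩ {p, q, z} :=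
        singleton_subset_iff.mpr ⟨Or.inr (Or.inr rfl), Or.inr (Or.inr rfl)⟩
      have h2 : mRank M {z} = 1 := by
        have hind : M.Indep {z} := by
          have := hsimple z hzE z hzE
          simpa [Set.pair_eq_singleton] using this
        rw [mRank_indep hfin hind, Set.ncard_singleton]
      have := mRank_mono hfin h1
      omega
    have hsub := mRank_submod hfin
      (show ({e,f,z} : Set α) ⊆ M.E by intro w hw; rcases hw with rfl|rfl|rfl <;> assumption)
      (show ({p,q,z} : Set α) ⊆ M.E by intro w hw; rcases hw with rfl|rfl|rfl <;> assumption)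
    have hUn : mRank M ({e, f, z} ∪ {p, q, z}) ≤ 3 := by omega
    have hfour : ({e, p} ∪ {f, q} : Set α) ⊆ {e, f, z} ∪ {p, q, z} := by
      intro w hw
      rcases hw with (rfl | rfl) | (rfl | rfl)
      · exact Or.inl (Or.inl rfl)
      · exact Or.inr (Or.inl rfl)
      · exact Or.inl (Or.inr (Or.inl rfl))
      · exact Or.inr (Or.inr (Or.inl rfl))
    have := mRank_mono hfin hfour
    omega

end Aux5
section Aux6

variable {M : Matroid α} {b bs V S X Y : Set α} {e f g p q s t u v x y z : α}

lemma closure_eq_of_indep_card (hfin : M.E.Finite) (hI : M.Indep S) (hS : S ⊆ M.closure V)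
    (hV : V ⊆ M.E) (hcard : mRank M V ≤ S.ncard) : M.closure S = M.closure V := by
  obtain ⟨J, hJ, hSJ⟩ := hI.subset_isBasis_of_subset hS (M.closure_subset_ground V)
  have hJcard : J.ncard = mRank M (M.closure V) := (mRank_eq_of_basis hfin hJ).symm
  rw [mRank_closure hfin V hV] at hJcard
  have hJS : S = J :=
    Set.eq_of_subset_of_ncard_le hSJ (by omega) (hfin.subset hJ.indep.subset_ground)
  rw [← hJS] at hJ
  rw [hJ.closure_eq_closure, M.closure_closure]

lemma cover_lemma (hfin : M.E.Finite) (hsimple : MSimple M)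
    (hb : IsCremonaBasis M b) (hbs : IsCremonaBasis M bs)
    (hVb : V ⊆ b) (hSbs : S ⊆ bs) (hSnb : ∀ g ∈ S, g ∉ b)
    (hclS : M.closure S = M.closure V) (hclG : M.closure (bs \ S) = M.closure (b \ V))
    (hz : z ∈ M.E) : z ∈ M.closure S ∨ z ∈ M.closure (bs \ S) := by
  have hbI := hb.1.indep
  have hbsI := hbs.1.indep
  have hbE : b ⊆ M.E := hbI.subset_ground
  have hbsE : bs ⊆ M.E := hbsI.subset_ground
  have hSE : S ⊆ M.E := hSbs.trans hbsE
  have hGE : bs \ S ⊆ M.E := diff_subset.trans hbsE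
  by_cases hzb : z ∈ b
  · by_cases hzV : z ∈ V
    · left; rw [hclS]; exact M.subset_closure _ (hVb.trans hbE) hzV
    · right; rw [hclG]; exact M.subset_closure _ (diff_subset.trans hbE) ⟨hzb, hzV⟩
  by_cases hzbs : z ∈ bs
  · by_cases hzS : z ∈ S
    · left; exact M.subset_closure _ hSE hzS
    · right; exact M.subset_closure _ hGE ⟨hzbs, hzS⟩
  -- z outside both bases
  obtain ⟨e, f, hebs, hfbs, hef, hzF⟩ := mem_Fij_exists hbs hz hzbs
  have hzcl : z ∈ M.closure {e, f} := Fij_subset_closure hzF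
  have hmix : ∀ e f, e ∈ S → f ∈ bs \ S → z ∈ M.closure {e, f} → False := by
    intro e f heS hfS hzcl'
    have heE : e ∈ M.E := hSE heS
    have hfE : f ∈ M.E := hGE hfS
    have hze : z ≠ e := fun h => hzbs (h ▸ hSbs heS)
    have hzf : z ≠ f := fun h => hzbs (h ▸ hfS.1)
    have hzcle : z ∉ M.closure {e} := simple_not_mem_closure_singleton hsimple hz heE hze
    have hzclf : z ∉ M.closure {f} := simple_not_mem_closure_singleton hsimple hz hfE hzf
    obtain ⟨p, q, hpb, hqb, hpq, hzF'⟩ := mem_Fij_exists hb hz hzb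
    have hzpq : z ∈ M.closure {p, q} := Fij_subset_closure hzF'
    have hcase : ∀ p q, p ∈ V → q ∈ b \ V → z ∈ M.closure {p, q} → False := by
      intro p q hpV hqV hzpq'
      exact mixed_contradiction hfin hsimple hb hbs hVb hSbs hSnb hclS hclG heS hfS hzbs hz
        hzcl' hpV hqV hzpq'
    by_cases hpV : p ∈ V
    · by_cases hqV : q ∈ V
      · -- both in V : f ∈ closure S, contradiction
        have hzS : z ∈ M.closure S := by
          rw [hclS]
          exact closure_pair_subset (M.subset_closure _ (hVb.trans hbE) hpV)
            (M.subset_closure _ (hVb.trans hbE) hqV) hzpq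
        have hfz : f ∈ M.closure {z, e} := pair_exchange' hzcl' hzcle
        have h1 : M.closure {z, e} ⊆ M.closure S :=
          closure_pair_subset hzS (M.subset_closure _ hSE heS)
        have h2 : f ∈ M.closure S ∩ M.closure {f} :=
          ⟨h1 hfz, M.mem_closure_self f hfE⟩
        rw [closure_inter_closure hfin hbsI hSbs (by simpa using hfS.1)] at h2
        have h3 : S ∩ {f} = (∅ : Set α) := by
          ext w; simp only [mem_inter_iff, mem_singleton_iff, mem_empty_iff_false, iff_false]
          rintro ⟨hwS, rfl⟩; exact hfS.2 hwS
        rw [h3, simple_closure_empty hsimple] at h2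
        exact h2
      · exact hcase p q hpV ⟨hqb, hqV⟩ hzpq
    · by_cases hqV : q ∈ V
      · exact hcase q p hqV ⟨hpb, hpV⟩ (by rwa [Set.pair_comm] at hzpq)
      · -- both outside V : e ∈ closure (bs \ S), contradiction
        have hzG : z ∈ M.closure (bs \ S) := by
          rw [hclG]
          exact closure_pair_subset (M.subset_closure _ (diff_subset.trans hbE) ⟨hpb, hpV⟩)
            (M.subset_closure _ (diff_subset.trans hbE) ⟨hqb, hqV⟩) hzpq
        have hez : e ∈ M.closure {z, f} := pair_exchange hzcl' hzclf
        have h1 : M.closure {z, f} ⊆ M.closure (bs \ S) :=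
          closure_pair_subset hzG (M.subset_closure _ hGE hfS)
        have h2 : e ∈ M.closure (bs \ S) ∩ M.closure {e} :=
          ⟨h1 hez, M.mem_closure_self e heE⟩
        rw [closure_inter_closure hfin hbsI diff_subset (by simpa using hSbs heS)] at h2
        have h3 : (bs \ S) ∩ {e} = (∅ : Set α) := by
          ext w; simp only [mem_inter_iff, mem_singleton_iff, mem_empty_iff_false, iff_false]
          rintro ⟨hwS, rfl⟩; exact hwS.2 heS
        rw [h3, simple_closure_empty hsimple] at h2
        exact h2
  by_cases heS : e ∈ S
  · by_cases hfS : f ∈ S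
    · left
      exact closure_pair_subset (M.subset_closure _ hSE heS)
        (M.subset_closure _ hSE hfS) hzcl
    · exact absurd (hmix e f heS ⟨hfbs, hfS⟩ hzcl) not_false
  · by_cases hfS : f ∈ S
    · exact absurd (hmix f e hfS ⟨hebs, heS⟩ (by rwa [Set.pair_comm] at hzcl)) not_false
    · right
      exact closure_pair_subset (M.subset_closure _ hGE ⟨hebs, heS⟩)
        (M.subset_closure _ hGE ⟨hfbs, hfS⟩) hzcl

end Aux6
section Aux7

variable {M : Matroid α} {b bs V S : Set α} {x x' : α} {d : ℕ}

lemma digon_lemma (hfin : M.E.Finite) (hsimple : MSimple M)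
    (hb : IsCremonaBasis M b) (hbs : IsCremonaBasis M bs)
    (hVb : V ⊆ b) (hx'V : x' ∈ V) (hx'bs : x' ∉ bs)
    (hends : ∀ g ∈ bs, ∃ p q, p ∈ V ∧ q ∈ V ∧ p ≠ q ∧ g ∈ Fij M p q) :
    ∃ q e f, q ∈ V ∧ x' ≠ q ∧ e ≠ f ∧ e ∈ bs ∧ f ∈ bs ∧ e ∈ Fij M x' q ∧ f ∈ Fij M x' q ∧
      x' ∈ M.closure {e, f} ∧ q ∈ M.closure {e, f} := by
  have hbI := hb.1.indep
  have hbsI := hbs.1.indep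
  have hbE : b ⊆ M.E := hbI.subset_ground
  have hbsE : bs ⊆ M.E := hbsI.subset_ground
  have hx'E : x' ∈ M.E := hbE (hVb hx'V)
  obtain ⟨e, f, hebs, hfbs, hef, hx'F⟩ := mem_Fij_exists hbs hx'E hx'bs
  have heE : e ∈ M.E := hbsE hebs
  have hfE : f ∈ M.E := hbsE hfbs
  have hx'cl : x' ∈ M.closure {e, f} := hx'F.1
  have hx'e : x' ≠ e := fun h => hx'bs (h ▸ hebs)
  have hx'f : x' ≠ f := fun h => hx'bs (h ▸ hfbs)
  have hx'cle : x' ∉ M.closure {e} := simple_not_mem_closure_singleton hsimple hx'E heE hx'e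
  have hx'clf : x' ∉ M.closure {f} := simple_not_mem_closure_singleton hsimple hx'E hfE hx'f
  obtain ⟨a, a', haV, ha'V, haa', heF⟩ := hends e hebs
  obtain ⟨c, c', hcV, hc'V, hcc', hfF⟩ := hends f hfbs
  have henb : e ∉ b := Fij_not_mem_base hb.1 (hVb haV) (hVb ha'V) heF
  have hfnb : f ∉ b := Fij_not_mem_base hb.1 (hVb hcV) (hVb hc'V) hfF
  have hnote : ∀ w ∈ b, e ∉ M.closure {w} := fun w hw =>
    simple_not_mem_closure_singleton hsimple heE (hbE hw) (fun h => henb (h ▸ hw))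
  have hnotf : ∀ w ∈ b, f ∉ M.closure {w} := fun w hw =>
    simple_not_mem_closure_singleton hsimple hfE (hbE hw) (fun h => hfnb (h ▸ hw))
  have hefE : ({e, f} : Set α) ⊆ M.E := by
    intro w hw; rcases hw with rfl | rfl <;> assumption
  by_cases hpair : ({a, a'} : Set α) = {c, c'}
  · -- the two lines coincide : build the digon
    have hFeq : Fij M c c' = Fij M a a' := by unfold Fij; rw [hpair]
    have hfF' : f ∈ Fij M a a' := hFeq ▸ hfF
    have hecl : e ∈ M.closure {a, a'} := Fij_subset_closure heF
    have hfcl : f ∈ M.closure {a, a'} := Fij_subset_closure hfF'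
    have hx'aa : x' ∈ M.closure {a, a'} := closure_pair_subset hecl hfcl hx'cl
    have hpairb : ({a, a'} : Set α) ⊆ b := by
      intro w hw; rcases hw with rfl | rfl; exacts [hVb haV, hVb ha'V]
    have hx'mem : x' = a ∨ x' = a' := by
      by_contra h
      push_neg at h
      have h2 : x' ∈ M.closure {x'} ∩ M.closure {a, a'} :=
        ⟨M.mem_closure_self x' hx'E, hx'aa⟩
      rw [closure_inter_closure hfin hbI (singleton_subset_iff.mpr (hVb hx'V)) hpairb] at h2
      have h3 : ({x'} : Set α) ∩ {a, a'} = ∅ := by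
        ext w
        simp only [mem_inter_iff, mem_singleton_iff, mem_insert_iff, mem_empty_iff_false,
          iff_false]
        rintro ⟨rfl, rfl | rfl⟩
        · exact h.1 rfl
        · exact h.2 rfl
      rw [h3, simple_closure_empty hsimple] at h2
      exact h2
    have hbuild : ∀ u, u ∈ V → x' ≠ u → e ∈ Fij M x' u → f ∈ Fij M x' u →
        ∃ q e f, q ∈ V ∧ x' ≠ q ∧ e ≠ f ∧ e ∈ bs ∧ f ∈ bs ∧ e ∈ Fij M x' q ∧
          f ∈ Fij M x' q ∧ x' ∈ M.closure {e, f} ∧ q ∈ M.closure {e, f} := by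
      intro u huV hx'u heFu hfFu
      refine ⟨u, e, f, huV, hx'u, hef, hebs, hfbs, heFu, hfFu, hx'cl, ?_⟩
      have he1 : e ∈ M.closure {u, x'} := by
        rw [Set.pair_comm]; exact Fij_subset_closure heFu
      have he2 : e ∉ M.closure {x'} := hnote x' (hVb hx'V)
      have hu : u ∈ M.closure {e, x'} := pair_exchange he1 he2
      exact closure_pair_subset (M.subset_closure _ hefE (Or.inl rfl)) hx'cl hu
    rcases hx'mem with rfl | rfl
    · exact hbuild a' ha'V haa' heF hfF'
    · have heF2 : e ∈ Fij M x' a := Fij_symm (M := M) ▸ heF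
      have hfF2 : f ∈ Fij M x' a := Fij_symm (M := M) ▸ hfF'
      exact hbuild a haV (Ne.symm haa') heF2 hfF2
  · -- the two lines are distinct : contradiction
    exfalso
    have he2 : e ∈ M.closure {x', f} := pair_exchange hx'cl hx'clf
    have hf2 : f ∈ M.closure {x', e} := pair_exchange' hx'cl hx'cle
    have hccb : ({c, c'} : Set α) ⊆ b := by
      intro w hw; rcases hw with rfl | rfl; exacts [hVb hcV, hVb hc'V]
    have haab : ({a, a'} : Set α) ⊆ b := by
      intro w hw; rcases hw with rfl | rfl; exacts [hVb haV, hVb ha'V]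
    have hinsb : insert x' ({c, c'} : Set α) ⊆ b := by
      intro w hw; rcases hw with rfl | hw
      · exact hVb hx'V
      · exact hccb hw
    have hsubB : M.closure {x', f} ⊆ M.closure (insert x' {c, c'}) := by
      refine closure_pair_subset (M.subset_closure _ (hinsb.trans hbE) (Or.inl rfl)) ?_
      exact M.closure_subset_closure (subset_insert _ _) (Fij_subset_closure hfF)
    have heB : e ∈ M.closure {a, a'} ∩ M.closure (insert x' {c, c'}) :=
      ⟨Fij_subset_closure heF, hsubB he2⟩
    rw [closure_inter_closure hfin hbI haab hinsb] at heB
    have haB : a ∈ insert x' ({c, c'} : Set α) := by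
      by_contra h
      have hsub : ({a, a'} : Set α) ∩ insert x' {c, c'} ⊆ {a'} := by
        rintro w ⟨hw1, hw2⟩
        rcases hw1 with rfl | rfl
        · exact absurd hw2 h
        · rfl
      exact hnote a' (hVb ha'V) (M.closure_subset_closure hsub heB)
    have ha'B : a' ∈ insert x' ({c, c'} : Set α) := by
      by_contra h
      have hsub : ({a, a'} : Set α) ∩ insert x' {c, c'} ⊆ {a} := by
        rintro w ⟨hw1, hw2⟩
        rcases hw1 with rfl | rfl
        · rfl
        · exact absurd hw2 h
      exact hnote a (hVb haV) (M.closure_subset_closure hsub heB)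
    have hfinal : ∀ a₂ c₂ : α, a₂ ∈ V → c₂ ∈ V → x' ≠ a₂ →
        e ∈ Fij M x' a₂ → f ∈ Fij M a₂ c₂ → x' ≠ c₂ → False := by
      intro a₂ c₂ h2 h4 hx'a₂ heF' hfF'
      intro hxc₂
      have hsub2 : M.closure {x', e} ⊆ M.closure {x', a₂} := by
        refine closure_pair_subset
          (M.subset_closure _ ?_ (Or.inl rfl)) (Fij_subset_closure heF')
        intro w hw; rcases hw with rfl | rfl; exacts [hx'E, hbE (hVb h2)]
      have hfmem : f ∈ M.closure {x', a₂} ∩ M.closure {a₂, c₂} :=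
        ⟨hsub2 hf2, Fij_subset_closure hfF'⟩
      have hxa₂b : ({x', a₂} : Set α) ⊆ b := by
        intro w hw; rcases hw with rfl | rfl; exacts [hVb hx'V, hVb h2]
      have ha₂c₂b : ({a₂, c₂} : Set α) ⊆ b := by
        intro w hw; rcases hw with rfl | rfl; exacts [hVb h2, hVb h4]
      rw [closure_inter_closure hfin hbI hxa₂b ha₂c₂b] at hfmem
      have hss : ({x', a₂} : Set α) ∩ {a₂, c₂} ⊆ {a₂} := by
        rintro w ⟨hw1, hw2⟩
        rcases hw1 with rfl | rfl
        · rcases hw2 with rfl | rfl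
          · rfl
          · exact absurd rfl hxc₂
        · rfl
      exact hnotf a₂ (hVb h2) (M.closure_subset_closure hss hfmem)
    by_cases hax : a = x'
    · subst hax
      have heF' : e ∈ Fij M a a' := heF
      rcases ha'B with rfl | rfl | rfl
      · exact haa' rfl
      · -- a' = c
        have hxc' : a ≠ c' := by
          intro h
          exact hpair (by rw [← h]; exact Set.pair_comm a a')
        exact hfinal a' c' ha'V hc'V haa' heF hfF hxc'
      · -- a' = c'
        have hxc : a ≠ c := by
          intro h
          apply hpair
          rw [← h]
        exact hfinal a' c hc'V hcV haa' heF (Fij_symm (M := M) ▸ hfF) hxc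
    · by_cases ha'x : a' = x'
      · subst ha'x
        have heF2 : e ∈ Fij M a' a := Fij_symm (M := M) ▸ heF
        rcases haB with rfl | rfl | rfl
        · exact haa' rfl
        · -- a = c
          have hxc' : a' ≠ c' := by
            intro h
            apply hpair
            rw [← h]
          exact hfinal a c' haV hc'V (Ne.symm haa') heF2 hfF hxc'
        · -- a = c'
          have hxc : a' ≠ c := by
            intro h
            apply hpair
            rw [← h]
            exact Set.pair_comm a a'
          exact hfinal a c haV hcV (Ne.symm haa') heF2 (Fij_symm (M := M) ▸ hfF) hxc
      · -- both a, a' in {c, c'} : the pairs coincide, contradiction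
        apply hpair
        rcases haB with h1 | h1 | h1
        · exact absurd h1 hax
        · rcases ha'B with h2 | h2 | h2
          · exact absurd h2 ha'x
          · exact absurd (h1.trans h2.symm) haa'
          · rw [h1, h2]
        · rcases ha'B with h2 | h2 | h2
          · exact absurd h2 ha'x
          · rw [h1, h2]; exact Set.pair_comm c' c
          · exact absurd (h1.trans h2.symm) haa'

end Aux7
section Aux7b

variable {M : Matroid α} {b bs V S : Set α} {x : α} {d : ℕ}

lemma digon_case (hfin : M.E.Finite) (hsimple : MSimple M) (hd : 2 ≤ d)
    (hrk : mRank M M.E = d + 1) (hb : IsCremonaBasis M b) (hbs : IsCremonaBasis M bs)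
    (hVeqb : V = b) (hxV : x ∈ V)
    (hVreach : ∀ y ∈ V, Relation.ReflTransGen (Adjb M b bs) x y)
    (hVbs : ∀ y ∈ V, y ∉ bs)
    (hends : ∀ g ∈ bs, ∃ p q, p ∈ V ∧ q ∈ V ∧ p ≠ q ∧ g ∈ Fij M p q) : False := by
  classical
  have hbI := hb.1.indep
  have hbsI := hbs.1.indep
  have hbE : b ⊆ M.E := hbI.subset_ground
  have hbsE : bs ⊆ M.E := hbsI.subset_ground
  have hVbsub : V ⊆ b := hVeqb ▸ Subset.rfl
  have hbfin : b.Finite := hfin.subset hbE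
  have hbsfin : bs.Finite := hfin.subset hbsE
  have hdig : ∀ y ∈ V, ∃ q e f, q ∈ V ∧ y ≠ q ∧ e ≠ f ∧ e ∈ bs ∧ f ∈ bs ∧ e ∈ Fij M y q ∧
      f ∈ Fij M y q ∧ y ∈ M.closure {e, f} ∧ q ∈ M.closure {e, f} :=
    fun y hy => digon_lemma hfin hsimple hb hbs hVbsub hy (hVbs y hy) hends
  choose! qf ef ff hq hyq hef hebs hfbs heF hfF hycl hqcl using hdig
  -- the matching property
  have hmatch : ∀ y ∈ V, qf (qf y) = y := by
    intro y hy
    set y' := qf y with hy'def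
    have hy'V : y' ∈ V := hq y hy
    have h1 : y' ∈ M.closure {ef y, ff y} := hqcl y hy
    have h2 : y' ∈ M.closure {ef y', ff y'} := hycl y' hy'V
    have hAbs : ({ef y, ff y} : Set α) ⊆ bs := by
      intro w hw; rcases hw with rfl | rfl; exacts [hebs y hy, hfbs y hy]
    have hBbs : ({ef y', ff y'} : Set α) ⊆ bs := by
      intro w hw; rcases hw with rfl | rfl; exacts [hebs y' hy'V, hfbs y' hy'V]
    have h3 : y' ∈ M.closure (({ef y, ff y} : Set α) ∩ {ef y', ff y'}) := by
      rw [← closure_inter_closure hfin hbsI hAbs hBbs]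
      exact ⟨h1, h2⟩
    have hne : ((({ef y, ff y} : Set α) ∩ {ef y', ff y'})).Nonempty := by
      by_contra h
      rw [Set.not_nonempty_iff_eq_empty] at h
      rw [h, simple_closure_empty hsimple] at h3
      exact h3
    obtain ⟨g, hg1, hg2⟩ := hne
    have hgF1 : g ∈ Fij M y (qf y) := by
      rcases hg1 with rfl | rfl
      · exact heF y hy
      · exact hfF y hy
    have hgF2 : g ∈ Fij M y' (qf y') := by
      rcases hg2 with rfl | rfl
      · exact heF y' hy'V
      · exact hfF y' hy'V
    have hE : ({y, qf y} : Set α) = {y', qf y'} :=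
      Fij_pair_eq hb (hVbsub hy) (hVbsub (hq y hy)) (hVbsub hy'V) (hVbsub (hq y' hy'V))
        (hyq y hy) (hyq y' hy'V) hgF1 hgF2
    have hymem : y ∈ ({y', qf y'} : Set α) := hE ▸ Or.inl rfl
    rcases hymem with h | h
    · exact absurd h.symm (fun hh => (hyq y hy) hh.symm)
    · exact h.symm
  -- the injection
  set ρ : Set α → α := fun P => if h : P.Nonempty then h.some else x with hρdef
  have hρ : ∀ y : α, ρ {y, qf y} ∈ ({y, qf y} : Set α) := by
    intro y
    have h : ({y, qf y} : Set α).Nonempty := ⟨y, Or.inl rfl⟩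
    simp only [hρdef, dif_pos h]
    exact h.some_mem
  set ι : α → α := fun y => if ρ {y, qf y} = y then ef y else ff (ρ {y, qf y}) with hιdef
  have hι_mem : ∀ y ∈ V, ι y ∈ bs ∧ ι y ∈ Fij M y (qf y) := by
    intro y hy
    by_cases hcase : ρ {y, qf y} = y
    · simp only [hιdef, if_pos hcase]
      exact ⟨hebs y hy, heF y hy⟩
    · have hρq : ρ {y, qf y} = qf y := by
        rcases hρ y with h | h
        · exact absurd h hcase
        · exact h
      simp only [hιdef, if_neg hcase, hρq]
      have hqV : qf y ∈ V := hq y hy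
      refine ⟨hfbs (qf y) hqV, ?_⟩
      have h1 : ff (qf y) ∈ Fij M (qf y) (qf (qf y)) := hfF (qf y) hqV
      rw [hmatch y hy] at h1
      rwa [Fij_symm] at h1
  have hinj : Set.InjOn ι V := by
    intro y₁ hy₁ y₂ hy₂ hval
    by_contra hne
    by_cases hPeq : ({y₁, qf y₁} : Set α) = {y₂, qf y₂}
    · have hy₂mem : y₂ ∈ ({y₁, qf y₁} : Set α) := hPeq ▸ Or.inl rfl
      have hy₂q : y₂ = qf y₁ := by
        rcases hy₂mem with h | h
        · exact absurd h.symm hne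
        · exact h
      have hy₁q : qf y₂ = y₁ := by rw [hy₂q, hmatch y₁ hy₁]
      have hρeq : ρ {y₁, qf y₁} = ρ {y₂, qf y₂} := by rw [hPeq]
      by_cases hcase : ρ {y₁, qf y₁} = y₁
      · have h1 : ι y₁ = ef y₁ := by simp only [hιdef, if_pos hcase]
        have hcase2 : ρ {y₂, qf y₂} ≠ y₂ := by
          rw [← hρeq, hcase]; exact fun h => hne h
        have h2 : ι y₂ = ff y₁ := by
          simp only [hιdef, if_neg hcase2, ← hρeq, hcase]
        rw [h1, h2] at hval
        exact hef y₁ hy₁ hval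
      · have hρq : ρ {y₁, qf y₁} = qf y₁ := by
          rcases hρ y₁ with h | h
          · exact absurd h hcase
          · exact h
        have h1 : ι y₁ = ff y₂ := by
          have : ι y₁ = ff (ρ {y₁, qf y₁}) := by simp only [hιdef, if_neg hcase]
          rw [this, hρq, ← hy₂q]
        have hcase2 : ρ {y₂, qf y₂} = y₂ := by rw [← hρeq, hρq, ← hy₂q]
        have h2 : ι y₂ = ef y₂ := by simp only [hιdef, if_pos hcase2]
        rw [h1, h2] at hval
        exact hef y₂ hy₂ hval.symm
    · -- distinct pairs : the Fij sets are disjoint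
      have h1 := (hι_mem y₁ hy₁).2
      have h2 := (hι_mem y₂ hy₂).2
      have hdisj := hb.2.1 y₁ (hVbsub hy₁) (qf y₁) (hVbsub (hq y₁ hy₁))
        y₂ (hVbsub hy₂) (qf y₂) (hVbsub (hq y₂ hy₂)) (hyq y₁ hy₁) (hyq y₂ hy₂) hPeq
      exact hdisj.ne_of_mem h1 h2 hval
  -- the image is all of bs
  have hbbscard : b.ncard = bs.ncard := by
    rw [base_ncard hfin hrk hb.1, base_ncard hfin hrk hbs.1]
  have himgsub : ι '' V ⊆ bs := by
    rintro w ⟨y, hy, rfl⟩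
    exact (hι_mem y hy).1
  have himg : ι '' V = bs := by
    apply Set.eq_of_subset_of_ncard_le himgsub _ hbsfin
    rw [Set.ncard_image_of_injOn hinj, hVeqb]
    omega
  -- find a vertex outside the pair of x
  have hVcard : V.ncard = d + 1 := by rw [hVeqb, base_ncard hfin hrk hb.1]
  obtain ⟨w, hwV, hwP⟩ : ∃ w ∈ V, w ∉ ({x, qf x} : Set α) := by
    by_contra h
    push_neg at h
    have hsub : V ⊆ {x, qf x} := h
    have hcard := Set.ncard_le_ncard hsub ((Set.finite_singleton (qf x)).insert x)
    have hP : ({x, qf x} : Set α).ncard ≤ 2 :=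
      (Set.ncard_insert_le x {qf x}).trans (by simp)
    omega
  -- crossing edge
  have hcross : ∀ z', Relation.ReflTransGen (Adjb M b bs) x z' →
      z' ∈ ({x, qf x} : Set α) ∨ ∃ u w' g, u ∈ ({x, qf x} : Set α) ∧
        w' ∉ ({x, qf x} : Set α) ∧ u ∈ b ∧ w' ∈ b ∧ u ≠ w' ∧ g ∈ bs ∧ g ∈ Fij M u w' := by
    intro z' hz'
    induction hz' with
    | refl => exact Or.inl (Or.inl rfl)
    | @tail y' z' hr hadj IH =>
      obtain ⟨hy'b, hz'b, hy'z', g, hgbs, hgF⟩ := hadj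
      rcases IH with hy'P | hcrossing
      · by_cases hz'P : z' ∈ ({x, qf x} : Set α)
        · exact Or.inl hz'P
        · exact Or.inr ⟨y', z', g, hy'P, hz'P, hy'b, hz'b, hy'z', hgbs, hgF⟩
      · exact Or.inr hcrossing
  rcases hcross w (hVreach w hwV) with hwP' | ⟨u, w', g, huP, hw'P, hub, hw'b, huw', hgbs, hgF⟩
  · exact hwP hwP'
  · -- derive the contradiction
    have hPu : ∀ y ∈ V, ∀ u' ∈ ({y, qf y} : Set α), ({u', qf u'} : Set α) = {y, qf y} := by
      intro y hy u' hu'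
      rcases hu' with rfl | rfl
      · rfl
      · rw [hmatch y hy]
        exact Set.pair_comm (qf y) y
    obtain ⟨x₃, hx₃V, hx₃g⟩ : ∃ x₃ ∈ V, ι x₃ = g := by
      have : g ∈ ι '' V := himg ▸ hgbs
      obtain ⟨x₃, hx₃, h⟩ := this
      exact ⟨x₃, hx₃, h⟩
    have hgF2 : g ∈ Fij M x₃ (qf x₃) := hx₃g ▸ (hι_mem x₃ hx₃V).2
    have hpair2 : ({u, w'} : Set α) = {x₃, qf x₃} :=
      Fij_pair_eq hb hub hw'b (hVbsub hx₃V) (hVbsub (hq x₃ hx₃V)) huw' (hyq x₃ hx₃V) hgF hgF2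
    have huV : u ∈ V := hVeqb ▸ hub
    have hu3 : u ∈ ({x₃, qf x₃} : Set α) := hpair2 ▸ Or.inl rfl
    have hPu3 : ({u, qf u} : Set α) = {x₃, qf x₃} := hPu x₃ hx₃V u hu3
    have hPux : ({u, qf u} : Set α) = {x, qf x} := hPu x hxV u huP
    have hfin2 : ({x, qf x} : Set α) = {u, w'} := by rw [← hPux, hPu3, hpair2]
    exact hw'P (hfin2 ▸ (Or.inr rfl : w' ∈ ({u, w'} : Set α)))

end Aux7b
section Aux8

variable {M : Matroid α} {b bs : Set α} {x : α} {d : ℕ}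

lemma claimB' (hfin : M.E.Finite) (hsimple : MSimple M) (hconn : MConnected M)
    (hd : 2 ≤ d) (hrk : mRank M M.E = d + 1)
    (hb : IsCremonaBasis M b) (hbs : IsCremonaBasis M bs) (hx : x ∈ suppb M b bs) :
    ∃ y ∈ b ∩ bs, Relation.ReflTransGen (Adjb M b bs) x y := by
  by_contra hcon
  push_neg at hcon
  classical
  set V := {y | y ∈ b ∧ Relation.ReflTransGen (Adjb M b bs) x y} with hVdef
  set S := {g | g ∈ bs ∧ ∃ p q, p ∈ V ∧ q ∈ V ∧ p ≠ q ∧ g ∈ Fij M p q} with hSdef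
  have hbI := hb.1.indep
  have hbsI := hbs.1.indep
  have hbE : b ⊆ M.E := hbI.subset_ground
  have hbsE : bs ⊆ M.E := hbsI.subset_ground
  have hxb : x ∈ b := suppb_subset_base hx
  have hxV : x ∈ V := ⟨hxb, Relation.ReflTransGen.refl⟩
  have hVb : V ⊆ b := fun y hy => hy.1
  have hVbs : ∀ y ∈ V, y ∉ bs := fun y hy hybs => hcon y ⟨hy.1, hybs⟩ hy.2
  have hSbs : S ⊆ bs := fun g hg => hg.1
  have hSnb : ∀ g ∈ S, g ∉ b := by
    rintro g ⟨hgbs, p, q, hpV, hqV, hpq, hgF⟩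
    exact Fij_not_mem_base hb.1 (hVb hpV) (hVb hqV) hgF
  have habsorb : ∀ g p q, g ∈ bs → p ∈ b → q ∈ b → p ≠ q → g ∈ Fij M p q → p ∈ V →
      q ∈ V ∧ g ∈ S := by
    intro g p q hgbs hpb hqb hpq hgF hpV
    have hadj : Adjb M b bs p q := ⟨hpb, hqb, hpq, g, hgbs, hgF⟩
    have hqV : q ∈ V := ⟨hqb, hpV.2.tail hadj⟩
    exact ⟨hqV, hgbs, p, q, hpV, hqV, hpq, hgF⟩
  have hSclV : S ⊆ M.closure V := by
    rintro g ⟨hgbs, p, q, hpV, hqV, hpq, hgF⟩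
    exact closure_pair_subset (M.subset_closure _ (hVb.trans hbE) hpV)
      (M.subset_closure _ (hVb.trans hbE) hqV) (Fij_subset_closure hgF)
  have hGsub : bs \ S ⊆ M.closure (b \ V) := by
    rintro g ⟨hgbs, hgS⟩
    by_cases hgb : g ∈ b
    · exact M.subset_closure _ (diff_subset.trans hbE)
        ⟨hgb, fun hgV => hVbs g hgV hgbs⟩
    · obtain ⟨p, q, hpb, hqb, hpq, hgF⟩ := mem_Fij_exists hb (hbsE hgbs) hgb
      have hpV : p ∉ V := fun h => hgS (habsorb g p q hgbs hpb hqb hpq hgF h).2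
      have hqV : q ∉ V := fun h =>
        hgS (habsorb g q p hgbs hqb hpb hpq.symm (Fij_symm (M := M) ▸ hgF) h).2
      exact closure_pair_subset (M.subset_closure _ (diff_subset.trans hbE) ⟨hpb, hpV⟩)
        (M.subset_closure _ (diff_subset.trans hbE) ⟨hqb, hqV⟩) (Fij_subset_closure hgF)
  have hVfin : V.Finite := hfin.subset (hVb.trans hbE)
  have hSfin : S.Finite := hfin.subset (hSbs.trans hbsE)
  have hbfin : b.Finite := hfin.subset hbE
  have hbsfin : bs.Finite := hfin.subset hbsE
  have hSind := hbsI.subset hSbs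
  have hVind := hbI.subset hVb
  have hcard1 : S.ncard ≤ V.ncard := by
    have h1 : S.ncard ≤ mRank M (M.closure V) := ncard_le_mRank hfin hSind hSclV
    rwa [mRank_closure hfin V (hVb.trans hbE), mRank_indep hfin hVind] at h1
  have hcard2 : (bs \ S).ncard ≤ (b \ V).ncard := by
    have h1 : (bs \ S).ncard ≤ mRank M (M.closure (b \ V)) :=
      ncard_le_mRank hfin (hbsI.subset diff_subset) hGsub
    rwa [mRank_closure hfin _ (diff_subset.trans hbE),
      mRank_indep hfin (hbI.subset diff_subset)] at h1
  have hbbscard : b.ncard = bs.ncard := by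
    rw [base_ncard hfin hrk hb.1, base_ncard hfin hrk hbs.1]
  have hd1 : (bs \ S).ncard = bs.ncard - S.ncard := Set.ncard_diff hSbs hSfin
  have hd2 : (b \ V).ncard = b.ncard - V.ncard := Set.ncard_diff hVb hVfin
  have hle1 : S.ncard ≤ bs.ncard := Set.ncard_le_ncard hSbs hbsfin
  have hle2 : V.ncard ≤ b.ncard := Set.ncard_le_ncard hVb hbfin
  have hSV : S.ncard = V.ncard := by omega
  have hGVcard : (bs \ S).ncard = (b \ V).ncard := by omega
  have hclS : M.closure S = M.closure V :=
    closure_eq_of_indep_card hfin hSind hSclV (hVb.trans hbE)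
      (by rw [mRank_indep hfin hVind]; omega)
  have hclG : M.closure (bs \ S) = M.closure (b \ V) :=
    closure_eq_of_indep_card hfin (hbsI.subset diff_subset) hGsub (diff_subset.trans hbE)
      (by rw [mRank_indep hfin (hbI.subset diff_subset)]; omega)
  by_cases hVeqb : V = b
  · have hSeqbs : S = bs := by
      apply Set.eq_of_subset_of_ncard_le hSbs _ hbsfin
      rw [hSV, hVeqb]
      omega
    have hends : ∀ g ∈ bs, ∃ p q, p ∈ V ∧ q ∈ V ∧ p ≠ q ∧ g ∈ Fij M p q := by
      intro g hg
      rw [← hSeqbs] at hg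
      exact hg.2
    exact digon_case hfin hsimple hd hrk hb hbs hVeqb hxV (fun y hy => hy.2) hVbs hends
  · obtain ⟨y0, hy0b, hy0V⟩ : ∃ y0, y0 ∈ b ∧ y0 ∉ V := by
      by_contra h
      push_neg at h
      exact hVeqb (Subset.antisymm hVb h)
    have hxF : x ∈ M.closure S := by
      rw [hclS]; exact M.subset_closure _ (hVb.trans hbE) hxV
    have hy0G : y0 ∈ M.closure (bs \ S) := by
      rw [hclG]; exact M.subset_closure _ (diff_subset.trans hbE) ⟨hy0b, hy0V⟩
    have hdisj : M.closure S ∩ M.closure (bs \ S) = ∅ := by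
      rw [closure_inter_closure hfin hbsI hSbs diff_subset]
      have h1 : S ∩ (bs \ S) = (∅ : Set α) := by
        ext w
        simp only [mem_inter_iff, mem_diff, mem_empty_iff_false, iff_false]
        tauto
      rw [h1, simple_closure_empty hsimple]
    have hxy0 : x ≠ y0 := by
      rintro rfl
      have : x ∈ M.closure S ∩ M.closure (bs \ S) := ⟨hxF, hy0G⟩
      rw [hdisj] at this
      exact this
    obtain hxy | ⟨C, hC, hxC, hyC⟩ := hconn.2 x (hbE hxb) y0 (hbE hy0b)
    · exact hxy0 hxy
    set Xc := C ∩ M.closure S with hXcdef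
    set Yc := C \ M.closure S with hYcdef
    have hYcG : Yc ⊆ M.closure (bs \ S) := fun w hw =>
      (cover_lemma hfin hsimple hb hbs hVb hSbs hSnb hclS hclG (hC.1 hw.1)).resolve_left hw.2
    have hCun : Xc ∪ Yc = C := by
      exact Set.inter_union_diff C (M.closure S)
    have hy0Yc : y0 ∈ Yc := by
      refine ⟨hyC, fun hy0F => ?_⟩
      have : y0 ∈ M.closure S ∩ M.closure (bs \ S) := ⟨hy0F, hy0G⟩
      rw [hdisj] at this
      exact this
    have hXind : M.Indep Xc := by
      refine (hC.2.2 y0 hyC).subset (fun w hw => ⟨hw.1, ?_⟩)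
      simp only [mem_singleton_iff]
      rintro rfl
      exact hy0Yc.2 hw.2
    have hYind : M.Indep Yc := by
      refine (hC.2.2 x hxC).subset (fun w hw => ⟨hw.1, ?_⟩)
      simp only [mem_singleton_iff]
      rintro rfl
      exact hw.2 hxF
    have hVbV : M.Indep (V ∪ (b \ V)) := by rwa [union_diff_cancel hVb]
    have hskew := mRank_union_of_skew hfin hVbV disjoint_sdiff_right
      (show Xc ⊆ M.closure V by rw [← hclS]; exact inter_subset_right)
      (show Yc ⊆ M.closure (b \ V) by rw [← hclG]; exact hYcG)
    rw [hCun, mRank_indep hfin hXind, mRank_indep hfin hYind] at hskew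
    have hCfin : C.Finite := hfin.subset hC.1
    have hXYdisj : Disjoint Xc Yc := by
      rw [Set.disjoint_left]
      intro w hw hw'
      exact hw'.2 hw.2
    have hXY : Xc.ncard + Yc.ncard = C.ncard := by
      rw [← Set.ncard_union_eq hXYdisj (hCfin.subset inter_subset_left)
        (hCfin.subset diff_subset), hCun]
    have hCind : M.Indep C := indep_of_mRank_eq hfin hC.1 (by omega)
    exact hC.2.1 hCind

end Aux8

section Aux4

variable {M : Matroid α} {b bs : Set α} {s t x : α} {d : ℕ}

lemma claimA (hsimple : MSimple M) (hb : IsCremonaBasis M b) (hbs : IsCremonaBasis M bs)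
    (hs : s ∈ b ∩ bs) (ht : t ∈ b ∩ bs)
    (h : Relation.ReflTransGen (Adjb M b bs) s t) : s = t := by
  by_contra hst
  have hsE : s ∈ M.E := hb.1.indep.subset_ground hs.1
  have hcl := reach_mem_closure hsimple hb.1 hbs.1 hsE h
  have hsub : insert s (bs \ b) ⊆ bs \ {t} := by
    intro w hw
    rcases hw with rfl | hw
    · exact ⟨hs.2, by simpa using hst⟩
    · exact ⟨hw.1, fun hwt => hw.2 (by simpa using (show w = t from hwt) ▸ ht.1)⟩
  exact hbs.1.indep.notMem_closure_diff_of_mem ht.2 (M.closure_subset_closure hsub hcl)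

lemma claimB (hfin : M.E.Finite) (hsimple : MSimple M) (hconn : MConnected M)
    (hd : 2 ≤ d) (hrk : mRank M M.E = d + 1)
    (hb : IsCremonaBasis M b) (hbs : IsCremonaBasis M bs) (hx : x ∈ suppb M b bs) :
    ∃ y ∈ b ∩ bs, Relation.ReflTransGen (Adjb M b bs) x y :=
  claimB' hfin hsimple hconn hd hrk hb hbs hx

end Aux4


/-- The number of connected components of `G_b(b*)` equals `|b ∩ b*|`. -/
theorem stmt9 (M : Matroid α) (hfin : M.E.Finite) (hsimple : MSimple M)
    (hconn : MConnected M) (d : ℕ) (hd : 2 ≤ d) (hrk : mRank M M.E = d + 1)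
    (b bs : Set α) (hb : IsCremonaBasis M b) (hbs : IsCremonaBasis M bs) (hne : b ≠ bs) :
    {V : Set α | ∃ x ∈ suppb M b bs, V = compOf M b bs x}.ncard = (b ∩ bs).ncard := by
  have key : {V : Set α | ∃ x ∈ suppb M b bs, V = compOf M b bs x}
      = (compOf M b bs) '' (b ∩ bs) := by
    ext V
    simp only [mem_setOf_eq, mem_image]
    constructor
    · rintro ⟨x, hx, rfl⟩
      obtain ⟨y, hy, hreach⟩ := claimB hfin hsimple hconn hd hrk hb hbs hx
      refine ⟨y, hy, ?_⟩
      ext z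
      simp only [compOf, mem_setOf_eq]
      constructor
      · rintro ⟨hz1, hz2⟩
        exact ⟨hz1, hreach.trans hz2⟩
      · rintro ⟨hz1, hz2⟩
        exact ⟨hz1, (reach_symm hreach).trans hz2⟩
    · rintro ⟨y, hy, rfl⟩
      exact ⟨y, inter_subset_suppb hy, rfl⟩
  rw [key]
  apply Set.ncard_image_of_injOn
  intro x hx y hy hxy
  have hxs : x ∈ compOf M b bs x := ⟨inter_subset_suppb hx, Relation.ReflTransGen.refl⟩
  rw [hxy] at hxs
  exact (claimA hsimple hb hbs hy hx hxs.2).symm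
end

section
/- Let M be a simple connected matroid of rank d+1 ≥ 3 admitting two different Cremona bases b and b*. Then there exists an involutive matroid automorphism φ of M with φ(b) = b*. -/
open Set

variable {α : Type*}

namespace CremonaProof

open Matroid Set

variable {α : Type*} {M : Matroid α} {b bs : Set α} {e f v x y z i j : α} {A S I J D V : Set α}

/-! ### Generic helpers -/

lemma eq_of_mem_closure_singleton (hs : MSimple M) (he : e ∈ M.E) (hf : f ∈ M.E)
    (h : e ∈ M.closure {f}) : e = f := by
  by_contra hne
  have hp : M.Indep {e, f} := hs e he f hf
  have h2 := hp.notMem_closure_diff_of_mem (mem_insert e {f})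
  have hd : ({e, f} : Set α) \ {e} = {f} := by
    ext u; simp only [mem_diff, mem_insert_iff, mem_singleton_iff]
    constructor
    · rintro ⟨h1 | h1, h2⟩ <;> simp_all
    · rintro rfl; exact ⟨Or.inr rfl, fun h => hne h.symm⟩
  rw [hd] at h2
  exact h2 h

lemma not_mem_closure_empty (hs : MSimple M) (he : e ∈ M.E) : e ∉ M.closure (∅ : Set α) := by
  intro h
  have hp : M.Indep {e} := by simpa using hs e he e he
  have h2 := hp.notMem_closure_diff_of_mem (rfl : e ∈ ({e} : Set α))
  rw [Set.diff_self] at h2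
  exact h2 h

/-- An independent set contained in the closure of another independent set is no bigger. -/
lemma indep_ncard_le (hfin : M.E.Finite) (hI : M.Indep I) (hJ : M.Indep J)
    (hIJ : I ⊆ M.closure J) : I.ncard ≤ J.ncard := by
  by_contra hlt
  push_neg at hlt
  have hIfin : I.Finite := hfin.subset hI.subset_ground
  have hJfin : J.Finite := hfin.subset hJ.subset_ground
  have hlt' : J.encard < I.encard := by
    rw [← hJfin.cast_ncard_eq, ← hIfin.cast_ncard_eq]
    exact_mod_cast hlt
  obtain ⟨u, huIJ, hins⟩ := hJ.augment hI hlt'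
  have huE : u ∈ M.E := hI.subset_ground huIJ.1
  rw [hJ.insert_indep_iff_of_notMem huIJ.2] at hins
  exact hins.2 (hIJ huIJ.1)

/-- An independent set of the same size as an independent set whose closure contains it
spans that set. -/
lemma tight_span (hfin : M.E.Finite) (hV : M.Indep V) (hS : M.Indep S)
    (hSV : S ⊆ M.closure V) (hcard : S.ncard = V.ncard) : V ⊆ M.closure S := by
  intro v hv
  by_contra hvS
  have hvE : v ∈ M.E := hV.subset_ground hv
  have hvnS : v ∉ S := fun h => hvS (M.subset_closure S hS.subset_ground h)
  have hins : M.Indep (insert v S) := by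
    rw [hS.insert_indep_iff_of_notMem hvnS]; exact ⟨hvE, hvS⟩
  have hsub : insert v S ⊆ M.closure V :=
    insert_subset (M.subset_closure V hV.subset_ground hv) hSV
  have := indep_ncard_le hfin hins hV hsub
  rw [Set.ncard_insert_of_notMem hvnS (hfin.subset hS.subset_ground)] at this
  omega


/-! ### Support theory for a Cremona basis -/

/-- The `b`-support of an element: those basis elements needed to span it. -/
def sb (M : Matroid α) (b : Set α) (e : α) : Set α := {v | v ∈ b ∧ e ∉ M.closure (b \ {v})}

lemma sb_subset (M : Matroid α) (b : Set α) (e : α) : sb M b e ⊆ b := fun _ h => h.1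

lemma sb_of_mem (hb : IsCremonaBasis M b) (he : e ∈ b) : sb M b e = {e} := by
  have hbE : b ⊆ M.E := hb.1.subset_ground
  ext v
  simp only [sb, mem_setOf_eq, mem_singleton_iff]
  constructor
  · rintro ⟨hv, hcl⟩
    by_contra hne
    exact hcl (M.subset_closure _ (diff_subset.trans hbE) ⟨he, by simpa using Ne.symm hne⟩)
  · rintro rfl
    exact ⟨he, hb.1.indep.notMem_closure_diff_of_mem he⟩

lemma exists_pair (hb : IsCremonaBasis M b) (he : e ∈ M.E) (heb : e ∉ b) :
    ∃ i j, i ∈ b ∧ j ∈ b ∧ i ≠ j ∧ e ∈ M.closure {i, j} ∧ e ∉ ({i, j} : Set α) := by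
  have h := hb.2.2
  have : e ∈ (⋃ x ∈ b, ⋃ y ∈ b, ⋃ _ : x ≠ y, Fij M x y) := by rw [h]; exact ⟨he, heb⟩
  simp only [mem_iUnion] at this
  obtain ⟨i, hi, j, hj, hij, hF⟩ := this
  exact ⟨i, j, hi, hj, hij, hF.1, hF.2⟩

/-- Key closure lemma: if `e ∈ cl{i,j}` (a support pair) and `e ∈ cl A` for `A ⊆ b`,
then `i ∈ A`. -/
lemma key0 (hs : MSimple M) (hb : IsCremonaBasis M b) (hi : i ∈ b) (hj : j ∈ b) (hij : i ≠ j)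
    (heb : e ∉ b) (hecl : e ∈ M.closure {i, j}) (hA : A ⊆ b) (hclo : e ∈ M.closure A) :
    i ∈ A := by
  have hbE : b ⊆ M.E := hb.1.subset_ground
  have heE : e ∈ M.E := M.closure_subset_ground _ hecl
  by_contra hiA
  have hnotj : e ∉ M.closure {j} := by
    intro h
    exact heb ((eq_of_mem_closure_singleton hs heE (hbE hj) h) ▸ hj)
  have hexch : i ∈ M.closure (insert e {j}) := M.mem_closure_insert hnotj hecl
  have hsub : insert e ({j} : Set α) ⊆ M.closure (A ∪ {j}) := by
    refine insert_subset ?_ ?_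
    · exact M.closure_subset_closure subset_union_left hclo
    · exact (M.subset_closure (A ∪ {j})
        (union_subset (hA.trans hbE) (singleton_subset_iff.mpr (hbE hj))))
        |>.trans (subset_refl _) |> fun h => singleton_subset_iff.mpr (h (mem_union_right A rfl))
  have hi2 : i ∈ M.closure (A ∪ {j}) :=
    (M.closure_subset_closure_of_subset_closure hsub) hexch
  have hsub2 : A ∪ {j} ⊆ b \ {i} := by
    rintro u (hu | hu)
    · exact ⟨hA hu, fun h => hiA (h ▸ hu)⟩
    · simp only [mem_singleton_iff] at hu
      exact ⟨hu ▸ hj, fun h => hij (by simp only [mem_singleton_iff] at h; rw [← hu, h])⟩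
  exact hb.1.indep.notMem_closure_diff_of_mem hi (M.closure_subset_closure hsub2 hi2)

lemma sb_pair (hs : MSimple M) (hb : IsCremonaBasis M b) (he : e ∈ M.E) (heb : e ∉ b) :
    ∃ i j, i ∈ b ∧ j ∈ b ∧ i ≠ j ∧ sb M b e = {i, j} ∧ e ∈ M.closure {i, j} := by
  obtain ⟨i, j, hi, hj, hij, hcl, hnm⟩ := exists_pair hb he heb
  have hbE : b ⊆ M.E := hb.1.subset_ground
  refine ⟨i, j, hi, hj, hij, ?_, hcl⟩
  ext v
  simp only [sb, mem_setOf_eq, mem_insert_iff, mem_singleton_iff]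
  constructor
  · rintro ⟨hv, hncl⟩
    by_contra hne
    push_neg at hne
    refine hncl (M.closure_subset_closure ?_ hcl)
    rintro u hu
    rcases hu with rfl | hu
    · refine ⟨hi, fun h => ?_⟩
      simp only [mem_singleton_iff] at h
      exact hne.1 h.symm
    · simp only [mem_singleton_iff] at hu
      subst hu
      refine ⟨hj, fun h => ?_⟩
      simp only [mem_singleton_iff] at h
      exact hne.2 h.symm
  · intro hv
    have hvb : v ∈ b := by rcases hv with rfl | rfl; exacts [hi, hj]
    refine ⟨hvb, fun hcl2 => ?_⟩
    have h1 : i ∈ b \ {v} := key0 hs hb hi hj hij heb hcl diff_subset hcl2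
    have h2 : j ∈ b \ {v} := by
      have hcl' : e ∈ M.closure {j, i} := by rwa [Set.pair_comm]
      exact key0 hs hb hj hi hij.symm heb hcl' diff_subset hcl2
    rcases hv with rfl | rfl
    · exact h1.2 rfl
    · exact h2.2 rfl

/-- The fundamental equivalence: membership in the closure of a subset of `b` is exactly
containment of the support. -/
lemma mem_closure_iff_sb (hs : MSimple M) (hb : IsCremonaBasis M b) (he : e ∈ M.E)
    (hA : A ⊆ b) : e ∈ M.closure A ↔ sb M b e ⊆ A := by
  have hbE : b ⊆ M.E := hb.1.subset_ground
  constructor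
  · intro hclo v hv
    by_contra hvA
    refine hv.2 (M.closure_subset_closure ?_ hclo)
    intro u hu
    refine ⟨hA hu, fun h => ?_⟩
    simp only [mem_singleton_iff] at h
    exact hvA (h ▸ hu)
  · intro hsub
    by_cases heb : e ∈ b
    · rw [sb_of_mem hb heb] at hsub
      exact M.subset_closure A (hA.trans hbE) (hsub rfl)
    · obtain ⟨i, j, hi, hj, hij, hsb, hcl⟩ := sb_pair hs hb he heb
      rw [hsb] at hsub
      exact M.closure_subset_closure hsub hcl

lemma mem_closure_sb (hs : MSimple M) (hb : IsCremonaBasis M b) (he : e ∈ M.E) :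
    e ∈ M.closure (sb M b e) :=
  (mem_closure_iff_sb hs hb he (sb_subset M b e)).2 (subset_refl _)

lemma sb_nonempty (hs : MSimple M) (hb : IsCremonaBasis M b) (he : e ∈ M.E) :
    (sb M b e).Nonempty := by
  rcases eq_empty_or_nonempty (sb M b e) with h | h
  · have := mem_closure_sb hs hb he
    rw [h] at this
    exact absurd this (not_mem_closure_empty hs he)
  · exact h

lemma sb_ncard_of_mem (hb : IsCremonaBasis M b) (he : e ∈ b) : (sb M b e).ncard = 1 := by
  rw [sb_of_mem hb he]; simp

lemma sb_ncard_of_not_mem (hs : MSimple M) (hb : IsCremonaBasis M b) (he : e ∈ M.E)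
    (heb : e ∉ b) : (sb M b e).ncard = 2 := by
  obtain ⟨i, j, _, _, hij, hsb, _⟩ := sb_pair hs hb he heb
  rw [hsb, Set.ncard_pair hij]

/-- The support of a set. -/
def SuppB (M : Matroid α) (b : Set α) (S : Set α) : Set α := ⋃ e ∈ S, sb M b e

lemma SuppB_subset (M : Matroid α) (b : Set α) (S : Set α) : SuppB M b S ⊆ b := by
  intro v hv
  simp only [SuppB, mem_iUnion] at hv
  obtain ⟨e, _, hv⟩ := hv
  exact hv.1

lemma sb_subset_SuppB (M : Matroid α) (b : Set α) (he : e ∈ S) : sb M b e ⊆ SuppB M b S :=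
  fun v hv => by simp only [SuppB, mem_iUnion]; exact ⟨e, he, hv⟩

lemma mem_SuppB_iff : v ∈ SuppB M b S ↔ ∃ e ∈ S, v ∈ sb M b e := by
  simp [SuppB]

lemma subset_closure_SuppB (hs : MSimple M) (hb : IsCremonaBasis M b) (hS : S ⊆ M.E) :
    S ⊆ M.closure (SuppB M b S) := by
  intro e he
  exact M.closure_subset_closure (sb_subset_SuppB M b he) (mem_closure_sb hs hb (hS he))

lemma sb_subset_SuppB_of_mem_closure (hs : MSimple M) (hb : IsCremonaBasis M b) (he : e ∈ M.E)
    (hS : S ⊆ M.E) (h : e ∈ M.closure S) : sb M b e ⊆ SuppB M b S := by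
  have h2 : e ∈ M.closure (SuppB M b S) :=
    M.closure_subset_closure_of_subset_closure (subset_closure_SuppB hs hb hS) h
  exact (mem_closure_iff_sb hs hb he (SuppB_subset M b S)).1 h2

lemma ncard_le_SuppB (hfin : M.E.Finite) (hs : MSimple M) (hb : IsCremonaBasis M b)
    (hS : M.Indep S) : S.ncard ≤ (SuppB M b S).ncard :=
  indep_ncard_le hfin hS (hb.1.indep.subset (SuppB_subset M b S))
    (subset_closure_SuppB hs hb hS.subset_ground)

/-- Rank additivity over disjoint subsets of the basis: independent subsets of the closures
of disjoint subsets of `b` have independent union. -/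
lemma claimD (hfin : M.E.Finite) (hb : IsCremonaBasis M b) {V₁ V₂ A₁ A₂ : Set α}
    (hV1 : V₁ ⊆ b) (hV2 : V₂ ⊆ b) (hdisj : Disjoint V₁ V₂) (hA1 : M.Indep A₁)
    (hA2 : M.Indep A₂) (h1 : A₁ ⊆ M.closure V₁) (h2 : A₂ ⊆ M.closure V₂) :
    M.Indep (A₁ ∪ A₂) := by
  have hbE : b ⊆ M.E := hb.1.subset_ground
  obtain ⟨J₁, hJ1, hAJ1⟩ := hA1.subset_isBasis_of_subset h1 (M.closure_subset_ground V₁)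
  obtain ⟨J₂, hJ2, hAJ2⟩ := hA2.subset_isBasis_of_subset h2 (M.closure_subset_ground V₂)
  have hV1i : M.Indep V₁ := hb.1.indep.subset hV1
  have hV2i : M.Indep V₂ := hb.1.indep.subset hV2
  have hV1b : M.IsBasis V₁ (M.closure V₁) := hV1i.isBasis_closure
  have hV2b : M.IsBasis V₂ (M.closure V₂) := hV2i.isBasis_closure
  have hc1 : J₁.ncard = V₁.ncard := by
    have := hJ1.encard_eq_encard hV1b
    have hJf : J₁.Finite := hfin.subset hJ1.indep.subset_ground
    have hVf : V₁.Finite := hfin.subset (hV1.trans hbE)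
    rw [← hJf.cast_ncard_eq, ← hVf.cast_ncard_eq] at this
    exact_mod_cast this
  have hc2 : J₂.ncard = V₂.ncard := by
    have := hJ2.encard_eq_encard hV2b
    have hJf : J₂.Finite := hfin.subset hJ2.indep.subset_ground
    have hVf : V₂.Finite := hfin.subset (hV2.trans hbE)
    rw [← hJf.cast_ncard_eq, ← hVf.cast_ncard_eq] at this
    exact_mod_cast this
  set J := J₁ ∪ J₂ with hJdef
  have hJE : J ⊆ M.E := union_subset hJ1.indep.subset_ground hJ2.indep.subset_ground
  have hVJ : V₁ ∪ V₂ ⊆ M.closure J := by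
    rintro v (hv | hv)
    · have : v ∈ M.closure V₁ := M.subset_closure V₁ (hV1.trans hbE) hv
      exact M.closure_subset_closure subset_union_left (hJ1.subset_closure this)
    · have : v ∈ M.closure V₂ := M.subset_closure V₂ (hV2.trans hbE) hv
      exact M.closure_subset_closure subset_union_right (hJ2.subset_closure this)
  obtain ⟨J', hJ'⟩ := M.exists_isBasis J hJE
  have hVJ' : V₁ ∪ V₂ ⊆ M.closure J' := by rwa [hJ'.closure_eq_closure]
  have hVi : M.Indep (V₁ ∪ V₂) := hb.1.indep.subset (union_subset hV1 hV2)
  have hcard1 : (V₁ ∪ V₂).ncard ≤ J'.ncard := indep_ncard_le hfin hVi hJ'.indep hVJ'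
  have hfinJ : J.Finite := hfin.subset hJE
  have hcard2 : J.ncard ≤ J₁.ncard + J₂.ncard := Set.ncard_union_le J₁ J₂
  have hVcard : (V₁ ∪ V₂).ncard = V₁.ncard + V₂.ncard :=
    Set.ncard_union_eq hdisj (hfin.subset (hV1.trans hbE)) (hfin.subset (hV2.trans hbE))
  have hJJ' : J'.ncard ≤ J.ncard := Set.ncard_le_ncard hJ'.subset hfinJ
  have hJeq : J' = J := Set.eq_of_subset_of_ncard_le hJ'.subset (by omega) hfinJ
  have hJindep : M.Indep J := hJeq ▸ hJ'.indep
  exact hJindep.subset (union_subset_union hAJ1 hAJ2)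

/-! ### Double counting -/

open Finset in
lemma double_count {C : Set α} (hC : C.Finite) (s : α → Set α)
    (hsfin : ∀ u ∈ C, (s u).Finite)
    (hcov : ∀ u ∈ C, ∀ v ∈ s u, ∃ u' ∈ C, u' ≠ u ∧ v ∈ s u') :
    2 * (⋃ u ∈ C, s u).ncard ≤ ∑ u ∈ hC.toFinset, (s u).ncard := by
  classical
  set U : Set α := ⋃ u ∈ C, s u with hUdef
  have hUfin : U.Finite := by
    apply Set.Finite.biUnion hC hsfin
  set Uf := hUfin.toFinset with hUf
  set Cf := hC.toFinset with hCf
  have hdeg : ∀ v ∈ Uf, 2 ≤ (Cf.filter (fun u => v ∈ s u)).card := by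
    intro v hv
    rw [hUf, Set.Finite.mem_toFinset] at hv
    simp only [hUdef, mem_iUnion] at hv
    obtain ⟨u, hu, hvu⟩ := hv
    obtain ⟨u', hu', hne, hvu'⟩ := hcov u hu v hvu
    rw [Nat.succ_le_iff, Finset.one_lt_card]
    refine ⟨u, ?_, u', ?_, fun h => hne h.symm⟩
    · rw [Finset.mem_filter, hCf, Set.Finite.mem_toFinset]; exact ⟨hu, hvu⟩
    · rw [Finset.mem_filter, hCf, Set.Finite.mem_toFinset]; exact ⟨hu', hvu'⟩
  have h1 : 2 * U.ncard ≤ ∑ v ∈ Uf, (Cf.filter (fun u => v ∈ s u)).card := by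
    have : U.ncard = Uf.card := Set.ncard_eq_toFinset_card U hUfin
    rw [this, Finset.card_eq_sum_ones Uf, Finset.mul_sum]
    exact Finset.sum_le_sum (fun v hv => by simpa using hdeg v hv)
  have h2 : ∑ v ∈ Uf, (Cf.filter (fun u => v ∈ s u)).card
      = ∑ u ∈ Cf, (Uf.filter (fun v => v ∈ s u)).card := by
    simp_rw [Finset.card_filter]
    exact Finset.sum_comm
  have h3 : ∀ u ∈ Cf, (Uf.filter (fun v => v ∈ s u)).card = (s u).ncard := by
    intro u hu
    rw [hCf, Set.Finite.mem_toFinset] at hu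
    have hsU : s u ⊆ U := by
      intro v hv; simp only [hUdef, mem_iUnion]; exact ⟨u, hu, hv⟩
    rw [Set.ncard_eq_toFinset_card (s u) (hsfin u hu)]
    congr 1
    ext v
    simp only [Finset.mem_filter, Set.Finite.mem_toFinset, hUf]
    exact ⟨fun h => h.2, fun h => ⟨hsU h, h⟩⟩
  rw [h2] at h1
  calc 2 * U.ncard ≤ ∑ u ∈ Cf, (Uf.filter (fun v => v ∈ s u)).card := h1
    _ = ∑ u ∈ Cf, (s u).ncard := Finset.sum_congr rfl h3

open Finset in
lemma sum_sb_ncard (hfin : M.E.Finite) (hs : MSimple M) (hb : IsCremonaBasis M b)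
    {C : Set α} (hC : C ⊆ M.E) :
    ∑ u ∈ (hfin.subset hC).toFinset, (sb M b u).ncard + (C ∩ b).ncard = 2 * C.ncard := by
  classical
  set Cf := (hfin.subset hC).toFinset with hCf
  have hsplit := Finset.sum_filter_add_sum_filter_not Cf (fun u => u ∈ b)
    (fun u => (sb M b u).ncard)
  have he1 : ∑ u ∈ Cf.filter (fun u => u ∈ b), (sb M b u).ncard
      = (Cf.filter (fun u => u ∈ b)).card := by
    rw [Finset.card_eq_sum_ones]
    refine Finset.sum_congr rfl (fun u hu => ?_)
    rw [Finset.mem_filter] at hu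
    exact sb_ncard_of_mem hb hu.2
  have he2 : ∑ u ∈ Cf.filter (fun u => ¬ u ∈ b), (sb M b u).ncard
      = 2 * (Cf.filter (fun u => ¬ u ∈ b)).card := by
    rw [Finset.card_eq_sum_ones, Finset.mul_sum]
    refine Finset.sum_congr rfl (fun u hu => ?_)
    rw [Finset.mem_filter, hCf, Set.Finite.mem_toFinset] at hu
    rw [sb_ncard_of_not_mem hs hb (hC hu.1) hu.2]
    omega
  have hcard1 : (Cf.filter (fun u => u ∈ b)).card = (C ∩ b).ncard := by
    rw [Set.ncard_eq_toFinset_card (C ∩ b) ((hfin.subset hC).subset inter_subset_left)]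
    congr 1
    ext u
    simp [hCf, Set.Finite.mem_toFinset]
  have hcard2 : (Cf.filter (fun u => ¬ u ∈ b)).card = (C \ b).ncard := by
    rw [Set.ncard_eq_toFinset_card (C \ b) ((hfin.subset hC).subset diff_subset)]
    congr 1
    ext u
    simp [hCf, Set.Finite.mem_toFinset, mem_diff]
  have htot : (C ∩ b).ncard + (C \ b).ncard = C.ncard := by
    rw [← Set.ncard_union_eq (disjoint_sdiff_right.mono_left Set.inter_subset_right)
      ((hfin.subset hC).subset inter_subset_left) ((hfin.subset hC).subset diff_subset)]
    congr 1
    rw [Set.inter_union_diff]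
  omega

/-! ### Two Cremona bases : support symmetry -/

lemma sb_finite (hfin : M.E.Finite) (hb : IsCremonaBasis M b) (e : α) : (sb M b e).Finite :=
  (hfin.subset hb.1.subset_ground).subset (sb_subset M b e)

/-- If `u ∈ b \ bs` supports `v ∈ bs \ b`, then `v` (bs-)supports `u`. -/
lemma C3 (hfin : M.E.Finite) (hs : MSimple M) (hb : IsCremonaBasis M b)
    (hbs : IsCremonaBasis M bs) {u v : α} (hu : u ∈ b) (hubs : u ∉ bs) (hv : v ∈ bs)
    (hvb : v ∉ b) (huv : u ∈ sb M b v) : v ∈ sb M bs u := by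
  have hbE : b ⊆ M.E := hb.1.subset_ground
  have hbsE : bs ⊆ M.E := hbs.1.subset_ground
  have hvE : v ∈ M.E := hbsE hv
  have huE : u ∈ M.E := hbE hu
  -- sb M b v is a pair containing u; let z be the other element
  obtain ⟨i, j, hi, hj, hij, hsbv, hclv⟩ := sb_pair hs hb hvE hvb
  have hclv' : v ∈ M.closure (sb M b v) := mem_closure_sb hs hb hvE
  rw [hsbv] at huv
  obtain ⟨z, hzb, huz, hsbv2⟩ : ∃ z, z ∈ b ∧ u ≠ z ∧ sb M b v = {u, z} := by
    rcases huv with rfl | rfl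
    · exact ⟨j, hj, hij, hsbv⟩
    · exact ⟨i, hi, hij.symm, by rw [hsbv, Set.pair_comm]⟩
  rw [hsbv2] at hclv'
  have hzE : z ∈ M.E := hbE hzb
  -- exchange : u ∈ cl {v, z}
  have hvnz : v ∉ M.closure {z} := by
    intro h
    exact hvb ((eq_of_mem_closure_singleton hs hvE hzE h) ▸ hzb)
  have hexch : u ∈ M.closure (insert v {z}) := by
    refine M.mem_closure_insert hvnz ?_
    exact hclv'
  -- hence sbs u ⊆ {v} ∪ sbs z
  have hsub : sb M bs u ⊆ insert v (sb M bs z) := by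
    refine (mem_closure_iff_sb hs hbs huE ?_).1 ?_
    · exact insert_subset hv (sb_subset M bs z)
    · refine M.closure_subset_closure_of_subset_closure ?_ hexch
      refine insert_subset ?_ ?_
      · exact M.subset_closure _ (insert_subset hvE ((sb_subset M bs z).trans hbsE))
          (mem_insert v _)
      · intro t ht
        simp only [mem_singleton_iff] at ht
        subst ht
        exact M.closure_subset_closure (subset_insert v _) (mem_closure_sb hs hbs hzE)
  by_contra hvnot
  have hsub2 : sb M bs u ⊆ sb M bs z := by
    intro t ht
    rcases hsub ht with rfl | ht2
    · exact absurd ht hvnot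
    · exact ht2
  -- then sbs u = sbs z is a pair, and everything lies on the line it spans
  have hucard : (sb M bs u).ncard = 2 := sb_ncard_of_not_mem hs hbs huE hubs
  by_cases hzbs : z ∈ bs
  · rw [sb_of_mem hbs hzbs] at hsub2
    have : (sb M bs u).ncard ≤ 1 := by
      have hfin1 : ({z} : Set α).Finite := finite_singleton z
      have := Set.ncard_le_ncard hsub2 hfin1
      simpa using this
    omega
  · have hzcard : (sb M bs z).ncard = 2 := sb_ncard_of_not_mem hs hbs hzE hzbs
    have heq : sb M bs u = sb M bs z :=
      Set.eq_of_subset_of_ncard_le hsub2 (by omega) (sb_finite hfin hbs z)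
    -- u and z both lie in cl (sbs z); hence v does as well
    have huc : u ∈ M.closure (sb M bs z) := heq ▸ mem_closure_sb hs hbs huE
    have hzc : z ∈ M.closure (sb M bs z) := mem_closure_sb hs hbs hzE
    have hvc : v ∈ M.closure (sb M bs z) := by
      refine M.closure_subset_closure_of_subset_closure ?_ hclv'
      exact insert_subset huc (by simpa using hzc)
    have : sb M bs v ⊆ sb M bs z := (mem_closure_iff_sb hs hbs hvE (sb_subset M bs z)).1 hvc
    rw [sb_of_mem hbs hv] at this
    have hvin : v ∈ sb M bs z := this rfl
    rw [← heq] at hvin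
    exact hvnot hvin

/-! ### The degenerate case is impossible (uses connectivity) -/

/-- If `y ∈ bs \ b` has support `{x, x'} ⊆ b \ bs`, there is a second element `w` of
`bs \ b` on the same line. -/
lemma w_step (hfin : M.E.Finite) (hs : MSimple M) (hb : IsCremonaBasis M b)
    (hbs : IsCremonaBasis M bs) {x x' y : α} (hx : x ∈ b \ bs) (hx' : x' ∈ b \ bs) (hxx' : x ≠ x')
    (hy : y ∈ bs \ b) (hsby : sb M b y = {x, x'}) :
    ∃ w, w ∈ bs \ b ∧ w ≠ y ∧ sb M b w = {x, x'} ∧ sb M bs x = {y, w} := by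
  have hbE : b ⊆ M.E := hb.1.subset_ground
  have hbsE : bs ⊆ M.E := hbs.1.subset_ground
  have hyE : y ∈ M.E := hbsE hy.1
  have hxE : x ∈ M.E := hbE hx.1
  have hx'E : x' ∈ M.E := hbE hx'.1
  have hycl : y ∈ M.closure {x, x'} := by
    have := mem_closure_sb hs hb hyE; rwa [hsby] at this
  -- y ∈ sbs x
  have hyx : x ∈ sb M b y := by rw [hsby]; exact mem_insert x _
  have hysbsx : y ∈ sb M bs x := C3 hfin hs hb hbs hx.1 hx.2 hy.1 hy.2 hyx
  obtain ⟨p, q, hp, hq, hpq, hsbsx, hclx⟩ := sb_pair hs hbs hxE hx.2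
  rw [hsbsx] at hysbsx
  obtain ⟨w, hwbs, hwy, hsbsx2⟩ : ∃ w, w ∈ bs ∧ w ≠ y ∧ sb M bs x = {y, w} := by
    rcases hysbsx with rfl | rfl
    · exact ⟨q, hq, fun h => hpq h.symm, hsbsx⟩
    · exact ⟨p, hp, hpq, by rw [hsbsx, Set.pair_comm]⟩
  have hwE : w ∈ M.E := hbsE hwbs
  have hclx' : x ∈ M.closure {y, w} := by
    have := mem_closure_sb hs hbs hxE; rwa [hsbsx2] at this
  -- w ∈ cl {x, x'}
  have hxny : x ∉ M.closure {y} := by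
    intro h
    exact hy.2 ((eq_of_mem_closure_singleton hs hxE hyE h) ▸ hx.1)
  have hw_cl_xy : w ∈ M.closure (insert x {y}) := by
    refine M.mem_closure_insert hxny ?_
    rwa [Set.pair_comm y w] at hclx'
  have hwL : w ∈ M.closure {x, x'} := by
    refine M.closure_subset_closure_of_subset_closure ?_ hw_cl_xy
    exact insert_subset (M.subset_closure _ (insert_subset hxE (by simpa using hx'E))
      (mem_insert x _)) (by simpa using hycl)
  -- w ∉ b
  have hwb : w ∉ b := by
    intro hwb
    have : sb M b w ⊆ {x, x'} :=
      (mem_closure_iff_sb hs hb hwE (insert_subset hx.1 (by simpa using hx'.1))).1 hwL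
    rw [sb_of_mem hb hwb] at this
    rcases this rfl with rfl | h
    · exact hx.2 hwbs
    · simp only [mem_singleton_iff] at h; subst h; exact hx'.2 hwbs
  -- sb w = {x, x'}
  have hsbw : sb M b w = {x, x'} := by
    have hsub : sb M b w ⊆ {x, x'} :=
      (mem_closure_iff_sb hs hb hwE (insert_subset hx.1 (by simpa using hx'.1))).1 hwL
    refine Set.eq_of_subset_of_ncard_le hsub ?_ ((finite_singleton x').insert x)
    rw [Set.ncard_pair hxx', sb_ncard_of_not_mem hs hb hwE hwb]
  exact ⟨w, ⟨hwbs, hwb⟩, hwy, hsbw, hsbsx2⟩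

/-- In the degenerate situation, any element supported on `x` is supported on exactly
`{x, x'}`. -/
lemma no_line (hfin : M.E.Finite) (hs : MSimple M) (hb : IsCremonaBasis M b)
    (hbs : IsCremonaBasis M bs) {x x' y w : α} (hx : x ∈ b \ bs) (hx' : x' ∈ b \ bs) (hxx' : x ≠ x')
    (hy : y ∈ bs \ b) (hw : w ∈ bs \ b) (hwy : w ≠ y) (hsby : sb M b y = {x, x'})
    (hsbw : sb M b w = {x, x'}) (hsbsx : sb M bs x = {y, w})
    {e : α} (he : e ∈ M.E) (heb : e ∉ b) (hxe : x ∈ sb M b e) : sb M b e = {x, x'} := by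
  have hbE : b ⊆ M.E := hb.1.subset_ground
  have hbsE : bs ⊆ M.E := hbs.1.subset_ground
  have hxE : x ∈ M.E := hbE hx.1
  have hx'E : x' ∈ M.E := hbE hx'.1
  have hyE : y ∈ M.E := hbsE hy.1
  have hwE : w ∈ M.E := hbsE hw.1
  by_cases hebs : e ∈ bs
  · -- e ∈ bs \ b, so e ∈ sbs x = {y, w}
    have : e ∈ sb M bs x := C3 hfin hs hb hbs hx.1 hx.2 hebs heb hxe
    rw [hsbsx] at this
    rcases this with rfl | h
    · exact hsby
    · simp only [mem_singleton_iff] at h; subst h; exact hsbw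
  -- e ∉ b ∪ bs
  obtain ⟨i, j, hi, hj, hij, hsbe, hcle⟩ := sb_pair hs hb he heb
  rw [hsbe] at hxe
  obtain ⟨q, hqb, hxq, hsbe2⟩ : ∃ q, q ∈ b ∧ x ≠ q ∧ sb M b e = {x, q} := by
    rcases hxe with rfl | rfl
    · exact ⟨j, hj, hij, hsbe⟩
    · exact ⟨i, hi, hij.symm, by rw [hsbe, Set.pair_comm]⟩
  by_cases hqx' : q = x'
  · rwa [hqx'] at hsbe2
  exfalso
  have hqE : q ∈ M.E := hbE hqb
  have hcle' : e ∈ M.closure {x, q} := by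
    have := mem_closure_sb hs hb he; rwa [hsbe2] at this
  -- exchange: x ∈ cl {e, q}
  have henq : e ∉ M.closure {q} := by
    intro h; exact heb ((eq_of_mem_closure_singleton hs he hqE h) ▸ hqb)
  have hx_cl : x ∈ M.closure (insert e {q}) := M.mem_closure_insert henq hcle'
  -- so sbs x ⊆ sbs e ∪ sbs q
  have hsub : sb M bs x ⊆ sb M bs e ∪ sb M bs q := by
    refine (mem_closure_iff_sb hs hbs hxE
      (union_subset (sb_subset M bs e) (sb_subset M bs q))).1 ?_
    refine M.closure_subset_closure_of_subset_closure ?_ hx_cl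
    refine insert_subset ?_ ?_
    · exact M.closure_subset_closure subset_union_left (mem_closure_sb hs hbs he)
    · intro t ht
      simp only [mem_singleton_iff] at ht; subst ht
      exact M.closure_subset_closure subset_union_right (mem_closure_sb hs hbs hqE)
  -- y, w ∉ sbs q
  have hynq : y ∉ sb M bs q := by
    intro hyq
    by_cases hqbs : q ∈ bs
    · rw [sb_of_mem hbs hqbs] at hyq
      simp only [mem_singleton_iff] at hyq
      exact hy.2 (hyq ▸ hqb)
    · have : q ∈ sb M b y := C3 hfin hs hbs hb hy.1 hy.2 hqb hqbs hyq
      rw [hsby] at this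
      rcases this with rfl | h
      · exact hxq rfl
      · simp only [mem_singleton_iff] at h; exact hqx' h
  have hwnq : w ∉ sb M bs q := by
    intro hwq
    by_cases hqbs : q ∈ bs
    · rw [sb_of_mem hbs hqbs] at hwq
      simp only [mem_singleton_iff] at hwq
      exact hw.2 (hwq ▸ hqb)
    · have : q ∈ sb M b w := C3 hfin hs hbs hb hw.1 hw.2 hqb hqbs hwq
      rw [hsbw] at this
      rcases this with rfl | h
      · exact hxq rfl
      · simp only [mem_singleton_iff] at h; exact hqx' h
  -- hence sbs e = {y, w}
  have hsbse : sb M bs e = {y, w} := by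
    have hyin : y ∈ sb M bs e := by
      have hmem : y ∈ sb M bs x := by rw [hsbsx]; exact mem_insert y _
      rcases hsub hmem with h | h
      · exact h
      · exact absurd h hynq
    have hwin : w ∈ sb M bs e := by
      have hmem : w ∈ sb M bs x := by rw [hsbsx]; simp
      rcases hsub hmem with h | h
      · exact h
      · exact absurd h hwnq
    have hsub2 : ({y, w} : Set α) ⊆ sb M bs e := by
      intro t ht
      rcases ht with rfl | ht
      · exact hyin
      · simp only [mem_singleton_iff] at ht; subst ht; exact hwin
    have h2 : (sb M bs e).ncard = 2 := sb_ncard_of_not_mem hs hbs he hebs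
    refine (Set.eq_of_subset_of_ncard_le hsub2 ?_ ((sb_finite hfin hbs e))).symm
    rw [h2, Set.ncard_pair (fun h => hwy h.symm)]
  -- e ∈ L = cl {x, x'}
  have hycl : y ∈ M.closure {x, x'} := by
    have := mem_closure_sb hs hb hyE; rwa [hsby] at this
  have hwcl : w ∈ M.closure {x, x'} := by
    have := mem_closure_sb hs hb hwE; rwa [hsbw] at this
  have heL : e ∈ M.closure {x, x'} := by
    have h1 : e ∈ M.closure (sb M bs e) := mem_closure_sb hs hbs he
    rw [hsbse] at h1
    refine M.closure_subset_closure_of_subset_closure ?_ h1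
    exact insert_subset hycl (by simpa using hwcl)
  -- exchange again: q ∈ cl {e, x} ⊆ L, contradiction
  have henx : e ∉ M.closure {x} := by
    intro h; exact heb ((eq_of_mem_closure_singleton hs he hxE h) ▸ hx.1)
  have hq_cl : q ∈ M.closure (insert e {x}) := by
    refine M.mem_closure_insert henx ?_
    rwa [Set.pair_comm x q] at hcle'
  have hqL : q ∈ M.closure {x, x'} := by
    refine M.closure_subset_closure_of_subset_closure ?_ hq_cl
    exact insert_subset heL (singleton_subset_iff.mpr
      (M.subset_closure _ (insert_subset hxE (singleton_subset_iff.mpr hx'E))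
        (by simp)))
  have : sb M b q ⊆ {x, x'} :=
    (mem_closure_iff_sb hs hb hqE (insert_subset hx.1 (by simpa using hx'.1))).1 hqL
  rw [sb_of_mem hb hqb] at this
  rcases this rfl with h | h
  · exact hxq h.symm
  · simp only [mem_singleton_iff] at h; exact hqx' h

/-- The degenerate configuration (a `bs`-element supported on two elements of `b \ bs`)
contradicts connectivity. -/
lemma no_degenerate (hfin : M.E.Finite) (hs : MSimple M) (hconn : MConnected M)
    (hb : IsCremonaBasis M b) (hbs : IsCremonaBasis M bs) (hcard : 3 ≤ b.ncard)
    {x x' y : α} (hx : x ∈ b \ bs) (hx' : x' ∈ b \ bs) (hxx' : x ≠ x') (hy : y ∈ bs \ b)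
    (hsby : sb M b y = {x, x'}) : False := by
  have hbE : b ⊆ M.E := hb.1.subset_ground
  have hxE : x ∈ M.E := hbE hx.1
  have hx'E : x' ∈ M.E := hbE hx'.1
  obtain ⟨w, hw, hwy, hsbw, hsbsx⟩ := w_step hfin hs hb hbs hx hx' hxx' hy hsby
  have hsby' : sb M b y = {x', x} := by rw [hsby, Set.pair_comm]
  obtain ⟨w', hw', hw'y, hsbw', hsbsx'⟩ := w_step hfin hs hb hbs hx' hx hxx'.symm hy hsby'
  -- pick q₀ ∈ b outside {x, x'}
  have hbfin : b.Finite := hfin.subset hbE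
  have hne : (b \ {x, x'}).Nonempty := by
    rw [Set.nonempty_iff_ne_empty]
    intro hempty
    have h1 : b.ncard ≤ (b \ ({x, x'} : Set α)).ncard + ({x, x'} : Set α).ncard :=
      Set.ncard_le_ncard_diff_add_ncard b {x, x'} ((finite_singleton x').insert x)
    rw [hempty] at h1
    simp only [Set.ncard_empty, zero_add] at h1
    have h2 : ({x, x'} : Set α).ncard = 2 := Set.ncard_pair hxx'
    omega
  obtain ⟨q₀, hq₀⟩ := hne
  have hq₀E : q₀ ∈ M.E := hbE hq₀.1
  have hxq₀ : x ≠ q₀ := fun h => hq₀.2 (h ▸ (mem_insert x _))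
  have hCex : ∃ C, MCircuit M C ∧ x ∈ C ∧ q₀ ∈ C := by
    rcases hconn.2 x hxE q₀ hq₀E with h | h
    · exact absurd h hxq₀
    · exact h
  obtain ⟨C, hC, hxC, hq₀C⟩ := hCex
  set L := M.closure {x, x'} with hL
  have hxL : x ∈ L := M.subset_closure _ (insert_subset hxE (by simpa using hx'E))
    (mem_insert x _)
  have hx'L : x' ∈ L := M.subset_closure _ (insert_subset hxE (by simpa using hx'E))
    (by simp)
  have hq₀L : q₀ ∉ L := by
    intro h
    have : sb M b q₀ ⊆ {x, x'} :=
      (mem_closure_iff_sb hs hb hq₀E (insert_subset hx.1 (by simpa using hx'.1))).1 h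
    rw [sb_of_mem hb hq₀.1] at this
    exact hq₀.2 (this rfl)
  -- split the circuit
  have hCA : M.Indep (C ∩ L) := by
    refine (hC.2.2 q₀ hq₀C).subset ?_
    intro e he
    exact ⟨he.1, fun h => hq₀L (by simp only [mem_singleton_iff] at h; exact h ▸ he.2)⟩
  have hCB : M.Indep (C \ L) := by
    refine (hC.2.2 x hxC).subset ?_
    intro e he
    exact ⟨he.1, fun h => he.2 (by simp only [mem_singleton_iff] at h; exact h ▸ hxL)⟩
  have hCBcl : C \ L ⊆ M.closure (b \ {x, x'}) := by
    intro e he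
    have heE : e ∈ M.E := hC.1 he.1
    by_cases heb : e ∈ b
    · refine M.subset_closure _ (diff_subset.trans hbE) ⟨heb, ?_⟩
      intro hmem
      rcases hmem with rfl | hmem
      · exact he.2 hxL
      · simp only [mem_singleton_iff] at hmem; subst hmem; exact he.2 hx'L
    · refine (mem_closure_iff_sb hs hb heE diff_subset).2 ?_
      intro v hv
      refine ⟨(sb_subset M b e) hv, ?_⟩
      intro hmem
      rcases hmem with rfl | hmem
      · have := no_line hfin hs hb hbs hx hx' hxx' hy hw hwy hsby hsbw hsbsx heE heb hv
        refine he.2 ?_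
        have h2 := mem_closure_sb hs hb heE
        rwa [this] at h2
      · simp only [mem_singleton_iff] at hmem; subst hmem
        have := no_line hfin hs hb hbs hx' hx hxx'.symm hy hw' hw'y hsby' hsbw' hsbsx'
          heE heb hv
        refine he.2 ?_
        have h2 := mem_closure_sb hs hb heE
        rw [this] at h2
        rwa [Set.pair_comm, ← hL] at h2
  have hCi : M.Indep C := by
    have := claimD hfin hb (V₁ := {x, x'}) (V₂ := b \ {x, x'})
      (insert_subset hx.1 (by simpa using hx'.1)) diff_subset Set.disjoint_sdiff_right
      hCA hCB (fun e he => he.2) hCBcl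
    rwa [Set.inter_union_diff] at this
  exact hC.2.1 hCi

/-- Every element of `bs \ b` has a well-structured partner. -/
lemma partner_exists (hfin : M.E.Finite) (hs : MSimple M) (hconn : MConnected M)
    (hb : IsCremonaBasis M b) (hbs : IsCremonaBasis M bs) (hcard : 3 ≤ b.ncard)
    {y : α} (hy : y ∈ bs \ b) :
    ∃ x z, x ∈ b \ bs ∧ z ∈ b ∩ bs ∧ sb M b y = {x, z} ∧ sb M bs x = {y, z} := by
  have hbE : b ⊆ M.E := hb.1.subset_ground
  have hbsE : bs ⊆ M.E := hbs.1.subset_ground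
  have hyE : y ∈ M.E := hbsE hy.1
  obtain ⟨i, j, hi, hj, hij, hsby, hycl⟩ := sb_pair hs hb hyE hy.2
  -- not both i, j ∈ bs
  have hnotboth : ¬ (i ∈ bs ∧ j ∈ bs) := by
    rintro ⟨hibs, hjbs⟩
    have hsub : ({i, j} : Set α) ⊆ bs \ {y} := by
      intro t ht
      rcases ht with rfl | ht
      · exact ⟨hibs, fun h => hy.2 (by simp only [mem_singleton_iff] at h; exact h ▸ hi)⟩
      · simp only [mem_singleton_iff] at ht; subst ht
        exact ⟨hjbs, fun h => hy.2 (by simp only [mem_singleton_iff] at h; exact h ▸ hj)⟩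
    exact hbs.1.indep.notMem_closure_diff_of_mem hy.1
      (M.closure_subset_closure hsub hycl)
  -- helper: given the pair written with the non-bs element first
  have main : ∀ x z : α, x ∈ b → z ∈ b → x ≠ z → x ∉ bs → sb M b y = {x, z} →
      ∃ x₀ z₀, x₀ ∈ b \ bs ∧ z₀ ∈ b ∩ bs ∧ sb M b y = {x₀, z₀} ∧ sb M bs x₀ = {y, z₀} := by
    intro x z hxb hzb hxz hxbs hsb2
    have hzbs : z ∈ bs := by
      by_contra hzbs
      exact no_degenerate hfin hs hconn hb hbs hcard ⟨hxb, hxbs⟩ ⟨hzb, hzbs⟩ hxz hy hsb2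
    have hxE : x ∈ M.E := hbE hxb
    have hzE : z ∈ M.E := hbE hzb
    have hycl2 : y ∈ M.closure {x, z} := by
      have := mem_closure_sb hs hb hyE; rwa [hsb2] at this
    have hynz : y ∉ M.closure {z} := by
      intro h
      exact hy.2 ((eq_of_mem_closure_singleton hs hyE hzE h) ▸ hzb)
    have hxcl : x ∈ M.closure (insert y {z}) := M.mem_closure_insert hynz hycl2
    have hsub : sb M bs x ⊆ {y, z} := by
      refine (mem_closure_iff_sb hs hbs hxE (insert_subset hy.1 (by simpa using hzbs))).1 ?_
      refine M.closure_subset_closure ?_ hxcl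
      exact subset_refl _
    have heq : sb M bs x = {y, z} := by
      refine Set.eq_of_subset_of_ncard_le hsub ?_ ((finite_singleton z).insert y)
      rw [Set.ncard_pair (fun h => hy.2 (by rw [h]; exact hzb)),
        sb_ncard_of_not_mem hs hbs hxE hxbs]
    exact ⟨x, z, ⟨hxb, hxbs⟩, ⟨hzb, hzbs⟩, hsb2, heq⟩
  by_cases hibs : i ∈ bs
  · have hjbs : j ∉ bs := fun h => hnotboth ⟨hibs, h⟩
    exact main j i hj hi hij.symm hjbs (by rw [hsby, Set.pair_comm])
  · exact main i j hi hj hij hibs hsby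

lemma sb_subset_of_closure_pair (hs : MSimple M) (hbs : IsCremonaBasis M bs)
    {u t z : α} (hu : u ∈ M.E) (ht : t ∈ M.E) (hz : z ∈ M.E)
    (h : u ∈ M.closure (insert t {z})) : sb M bs u ⊆ sb M bs t ∪ sb M bs z := by
  refine (mem_closure_iff_sb hs hbs hu
    (union_subset (sb_subset M bs t) (sb_subset M bs z))).1 ?_
  refine M.closure_subset_closure_of_subset_closure ?_ h
  refine insert_subset ?_ ?_
  · exact M.closure_subset_closure subset_union_left (mem_closure_sb hs hbs ht)
  · intro r hr
    simp only [mem_singleton_iff] at hr; subst hr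
    exact M.closure_subset_closure subset_union_right (mem_closure_sb hs hbs hz)

/-- The bundled properties of the involution `φ`. -/
structure Ctx (M : Matroid α) (b bs : Set α) (φ : α → α) : Prop where
  fin : M.E.Finite
  simple : MSimple M
  crb : IsCremonaBasis M b
  crbs : IsCremonaBasis M bs
  hmem : ∀ e ∈ M.E, φ e ∈ M.E
  hinv : ∀ e ∈ M.E, φ (φ e) = e
  hfix : ∀ e ∈ M.E, e ∉ b → e ∉ bs → φ e = e
  mapb : ∀ e ∈ b, φ e ∈ bs
  mapbs : ∀ e ∈ bs, φ e ∈ b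
  fixc : ∀ e ∈ b ∩ bs, φ e = e
  suppid : ∀ e ∈ M.E, sb M bs (φ e) = φ '' sb M b e
  partner : ∀ x ∈ b \ bs, φ x ∈ bs \ b ∧
    ∃ z ∈ b ∩ bs, sb M bs x = {φ x, z} ∧ sb M b (φ x) = {x, z}

namespace Ctx

variable {φ : α → α}

lemma image_image (hc : Ctx M b bs φ) {A : Set α} (hA : A ⊆ M.E) : φ '' (φ '' A) = A := by
  ext t
  simp only [mem_image]
  constructor
  · rintro ⟨u, ⟨a, ha, rfl⟩, rfl⟩
    rwa [hc.hinv a (hA ha)]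
  · intro ht
    exact ⟨φ t, ⟨t, ht, rfl⟩, hc.hinv t (hA ht)⟩

lemma mapXY (hc : Ctx M b bs φ) {x : α} (hx : x ∈ b \ bs) : φ x ∈ bs \ b :=
  (hc.partner x hx).1

lemma mapYX (hc : Ctx M b bs φ) {y : α} (hy : y ∈ bs \ b) : φ y ∈ b \ bs := by
  have h1 : φ y ∈ b := hc.mapbs y hy.1
  refine ⟨h1, fun h2 => ?_⟩
  have := hc.fixc (φ y) ⟨h1, h2⟩
  have hyE : y ∈ M.E := hc.crbs.1.subset_ground hy.1
  rw [hc.hinv y hyE] at this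
  exact hy.2 (this ▸ h1)

lemma symm (hc : Ctx M b bs φ) : Ctx M bs b φ where
  fin := hc.fin
  simple := hc.simple
  crb := hc.crbs
  crbs := hc.crb
  hmem := hc.hmem
  hinv := hc.hinv
  hfix := fun e he h1 h2 => hc.hfix e he h2 h1
  mapb := hc.mapbs
  mapbs := hc.mapb
  fixc := fun e he => hc.fixc e ⟨he.2, he.1⟩
  suppid := by
    intro e he
    have h1 := hc.suppid (φ e) (hc.hmem e he)
    rw [hc.hinv e he] at h1
    have h2 : φ '' sb M bs e = φ '' (φ '' sb M b (φ e)) := by rw [h1]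
    rw [hc.image_image ((sb_subset M b (φ e)).trans hc.crb.1.subset_ground)] at h2
    exact h2.symm
  partner := by
    intro y hy
    have hyx : φ y ∈ b \ bs := hc.mapYX hy
    obtain ⟨hyxmem, z, hz, h1, h2⟩ := hc.partner (φ y) hyx
    have hyE : y ∈ M.E := hc.crbs.1.subset_ground hy.1
    rw [hc.hinv y hyE] at h1 h2 hyxmem
    exact ⟨hyx, z, ⟨hz.2, hz.1⟩, h2, h1⟩

end Ctx

/-- Construction of the involution from two Cremona bases. -/
lemma ctx_exists (hfin : M.E.Finite) (hs : MSimple M) (hconn : MConnected M)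
    (hb : IsCremonaBasis M b) (hbs : IsCremonaBasis M bs) (hcard : 3 ≤ b.ncard) :
    ∃ φ : α → α, Ctx M b bs φ := by
  classical
  have hbE : b ⊆ M.E := hb.1.subset_ground
  have hbsE : bs ⊆ M.E := hbs.1.subset_ground
  -- the partner data for each y ∈ bs \ b
  have hex : ∀ y ∈ bs \ b, ∃ x, (x ∈ b \ bs ∧ ∃ z ∈ b ∩ bs,
      sb M b y = {x, z} ∧ sb M bs x = {y, z}) := by
    intro y hy
    obtain ⟨x, z, hx, hz, h1, h2⟩ := partner_exists hfin hs hconn hb hbs hcard hy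
    exact ⟨x, hx, z, hz, h1, h2⟩
  set px : α → α := fun y => if h : y ∈ bs \ b then (hex y h).choose else y with hpx
  have hpx_spec : ∀ y (h : y ∈ bs \ b), px y ∈ b \ bs ∧ ∃ z ∈ b ∩ bs,
      sb M b y = {px y, z} ∧ sb M bs (px y) = {y, z} := by
    intro y h
    have := (hex y h).choose_spec
    simp only [hpx, dif_pos h]
    exact this
  -- injectivity of px on bs \ b
  have hpx_inj : ∀ y ∈ bs \ b, ∀ y' ∈ bs \ b, px y = px y' → y = y' := by
    intro y hy y' hy' heq
    obtain ⟨hx1, z, hz, h1, h2⟩ := hpx_spec y hy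
    obtain ⟨hx1', z', hz', h1', h2'⟩ := hpx_spec y' hy'
    rw [heq] at h2
    rw [h2'] at h2
    have : y ∈ ({y', z'} : Set α) := by rw [h2]; exact mem_insert y _
    rcases this with h | h
    · exact h
    · simp only [mem_singleton_iff] at h
      exact absurd (h ▸ hz'.1) hy.2
  -- surjectivity of px onto b \ bs
  have hpx_surj : ∀ x ∈ b \ bs, ∃ y, y ∈ bs \ b ∧ px y = x := by
    intro x hx
    have hxE : x ∈ M.E := hbE hx.1
    set A : Set α := (b ∩ bs) ∪ ⋃ y ∈ bs \ b, sb M b y with hA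
    have hAb : A ⊆ b := by
      rintro v (hv | hv)
      · exact hv.1
      · simp only [mem_iUnion] at hv
        obtain ⟨y, _, hv⟩ := hv
        exact (sb_subset M b y) hv
    have hbsA : bs ⊆ M.closure A := by
      intro v hv
      by_cases hvb : v ∈ b
      · exact M.subset_closure A (hAb.trans hbE) (Or.inl ⟨hvb, hv⟩)
      · refine M.closure_subset_closure ?_ (mem_closure_sb hs hb (hbsE hv))
        intro t ht
        refine Or.inr ?_
        simp only [mem_iUnion]
        exact ⟨v, ⟨hv, hvb⟩, ht⟩
    have hxA : x ∈ M.closure A := by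
      have h1 : x ∈ M.closure bs := by rw [hbs.1.closure_eq]; exact hxE
      exact M.closure_subset_closure_of_subset_closure hbsA h1
    have hxmem : x ∈ A := by
      have := (mem_closure_iff_sb hs hb hxE hAb).1 hxA
      rw [sb_of_mem hb hx.1] at this
      exact this rfl
    rcases hxmem with h | h
    · exact absurd h.2 hx.2
    · simp only [mem_iUnion] at h
      obtain ⟨y, hy, hxy⟩ := h
      obtain ⟨hx1, z, hz, h1, h2⟩ := hpx_spec y hy
      rw [h1] at hxy
      rcases hxy with h | h
      · exact ⟨y, hy, h.symm⟩
      · simp only [mem_singleton_iff] at h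
        exact absurd (h ▸ hz.2) hx.2
  -- define φ
  set φ : α → α := fun e =>
    if h : e ∈ bs \ b then px e
    else if h2 : e ∈ b \ bs then (hpx_surj e h2).choose
    else e with hφ
  have hφY : ∀ y ∈ bs \ b, φ y = px y := by
    intro y hy; simp only [hφ, dif_pos hy]
  have hφX : ∀ x (h : x ∈ b \ bs), φ x = (hpx_surj x h).choose := by
    intro x h
    have hnot : x ∉ bs \ b := fun h2 => h2.2 h.1
    simp only [hφ, dif_neg hnot, dif_pos h]
  have hφX_spec : ∀ x (h : x ∈ b \ bs), φ x ∈ bs \ b ∧ px (φ x) = x := by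
    intro x h
    rw [hφX x h]
    exact (hpx_surj x h).choose_spec
  have hφfix : ∀ e, e ∉ b → e ∉ bs → φ e = e := by
    intro e h1 h2
    simp only [hφ, dif_neg (fun h : e ∈ bs \ b => h2 h.1),
      dif_neg (fun h : e ∈ b \ bs => h1 h.1)]
  have hφc : ∀ e ∈ b ∩ bs, φ e = e := by
    intro e he
    simp only [hφ, dif_neg (fun h : e ∈ bs \ b => h.2 he.1),
      dif_neg (fun h : e ∈ b \ bs => h.2 he.2)]
  have hφYX : ∀ y ∈ bs \ b, φ y ∈ b \ bs := by
    intro y hy; rw [hφY y hy]; exact (hpx_spec y hy).1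
  have hφXY : ∀ x ∈ b \ bs, φ x ∈ bs \ b := fun x h => (hφX_spec x h).1
  have hφinvY : ∀ y ∈ bs \ b, φ (φ y) = y := by
    intro y hy
    have h1 : φ y ∈ b \ bs := hφYX y hy
    obtain ⟨hmem, hpxeq⟩ := hφX_spec (φ y) h1
    rw [hφY y hy] at hpxeq hmem ⊢
    exact hpx_inj _ hmem y hy hpxeq
  have hφinvX : ∀ x ∈ b \ bs, φ (φ x) = x := by
    intro x hx
    obtain ⟨hmem, hpxeq⟩ := hφX_spec x hx
    rw [hφY _ hmem]
    exact hpxeq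
  -- partner data in terms of φ
  have hpart : ∀ x ∈ b \ bs, ∃ z ∈ b ∩ bs,
      sb M bs x = {φ x, z} ∧ sb M b (φ x) = {x, z} := by
    intro x hx
    obtain ⟨hmem, hpxeq⟩ := hφX_spec x hx
    obtain ⟨hx1, z, hz, h1, h2⟩ := hpx_spec (φ x) hmem
    rw [hpxeq] at h1 h2
    exact ⟨z, hz, h2, h1⟩
  refine ⟨φ, ?_, ?_, ?_, ?_, ?_, ?_, ?_, ?_, ?_, ?_, ?_, ?_⟩
  · exact hfin
  · exact hs
  · exact hb
  · exact hbs
  · -- maps E to E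
    intro e he
    by_cases h1 : e ∈ bs \ b
    · exact hbE (hφYX e h1).1
    by_cases h2 : e ∈ b \ bs
    · exact hbsE (hφXY e h2).1
    · by_cases h3 : e ∈ b
      · have : e ∈ b ∩ bs := ⟨h3, by_contra fun h => h2 ⟨h3, h⟩⟩
        rw [hφc e this]; exact he
      · by_cases h4 : e ∈ bs
        · exact absurd ⟨h4, h3⟩ h1
        · rw [hφfix e h3 h4]; exact he
  · -- involution
    intro e he
    by_cases h1 : e ∈ bs \ b
    · exact hφinvY e h1
    by_cases h2 : e ∈ b \ bs
    · exact hφinvX e h2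
    · by_cases h3 : e ∈ b
      · have hc : e ∈ b ∩ bs := ⟨h3, by_contra fun h => h2 ⟨h3, h⟩⟩
        rw [hφc e hc, hφc e hc]
      · by_cases h4 : e ∈ bs
        · exact absurd ⟨h4, h3⟩ h1
        · rw [hφfix e h3 h4, hφfix e h3 h4]
  · exact fun e _ h1 h2 => hφfix e h1 h2
  · -- b → bs
    intro e he
    by_cases h2 : e ∈ bs
    · rw [hφc e ⟨he, h2⟩]; exact h2
    · exact (hφXY e ⟨he, h2⟩).1
  · -- bs → b
    intro e he
    by_cases h2 : e ∈ b
    · rw [hφc e ⟨h2, he⟩]; exact h2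
    · exact (hφYX e ⟨he, h2⟩).1
  · exact hφc
  · -- suppid
    intro e he
    by_cases h1 : e ∈ bs \ b
    · -- e = y ∈ Y
      obtain ⟨z, hz, hsbsx, hsby⟩ := hpart (φ e) (hφYX e h1)
      rw [hφinvY e h1] at hsbsx hsby
      have hsbe : sb M b e = {φ e, z} := hsby
      rw [hsbe, Set.image_pair, hφc z hz, hφinvY e h1]
      exact hsbsx
    by_cases h2 : e ∈ b \ bs
    · -- e = x ∈ X
      rw [sb_of_mem hb h2.1, Set.image_singleton]
      exact sb_of_mem hbs (hφXY e h2).1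
    by_cases h3 : e ∈ b
    · -- e ∈ b ∩ bs
      have hc : e ∈ b ∩ bs := ⟨h3, by_contra fun h => h2 ⟨h3, h⟩⟩
      rw [hφc e hc, sb_of_mem hb h3, Set.image_singleton, hφc e hc]
      exact sb_of_mem hbs hc.2
    by_cases h4 : e ∈ bs
    · exact absurd ⟨h4, h3⟩ h1
    -- main case : e ∉ b ∪ bs
    rw [hφfix e h3 h4]
    obtain ⟨i, j, hi, hj, hij, hsbe, hecl⟩ := sb_pair hs hb he h3
    have hiE : i ∈ M.E := hbE hi
    have hjE : j ∈ M.E := hbE hj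
    -- helper for the mixed case
    have mixed : ∀ x z : α, x ∈ b \ bs → z ∈ b ∩ bs → x ≠ z → e ∈ M.closure {x, z} →
        sb M bs e = {φ x, z} := by
      intro x z hx hz hxz hecl2
      obtain ⟨z₀, hz₀, hsbsx, hsbyx⟩ := hpart x hx
      set y := φ x with hy
      have hyY : y ∈ bs \ b := hφXY x hx
      have hxE : x ∈ M.E := hbE hx.1
      have hzE : z ∈ M.E := hbE hz.1
      have hz₀E : z₀ ∈ M.E := hbE hz₀.1
      have hyE : y ∈ M.E := hbsE hyY.1
      have hycl : y ∈ M.closure {x, z₀} := by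
        have := mem_closure_sb hs hb hyE; rwa [hsbyx] at this
      have hzz₀ : z = z₀ := by
        by_contra hne
        -- exchange x into cl {e, z}
        have henz : e ∉ M.closure {z} := fun h =>
          h3 ((eq_of_mem_closure_singleton hs he hzE h) ▸ hz.1)
        have hxcl : x ∈ M.closure (insert e {z}) := M.mem_closure_insert henz hecl2
        have hsub : sb M bs x ⊆ sb M bs e ∪ sb M bs z :=
          sb_subset_of_closure_pair hs hbs hxE he hzE hxcl
        rw [hsbsx, sb_of_mem hbs hz.2] at hsub
        have hy_in : y ∈ sb M bs e := by
          rcases hsub (mem_insert y _) with h | h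
          · exact h
          · simp only [mem_singleton_iff] at h
            exact absurd (by rw [h]; exact hz.1 : y ∈ b) hyY.2
        have hz₀_in : z₀ ∈ sb M bs e := by
          rcases hsub (by simp : z₀ ∈ ({y, z₀} : Set α)) with h | h
          · exact h
          · simp only [mem_singleton_iff] at h
            exact absurd h.symm hne
        have hsbse : sb M bs e = {y, z₀} := by
          have hsub2 : ({y, z₀} : Set α) ⊆ sb M bs e := by
            intro t ht
            rcases ht with rfl | ht
            · exact hy_in
            · simp only [mem_singleton_iff] at ht; subst ht; exact hz₀_in
          refine (Set.eq_of_subset_of_ncard_le hsub2 ?_ (sb_finite hfin hbs e)).symm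
          rw [sb_ncard_of_not_mem hs hbs he h4,
            Set.ncard_pair (fun h => hyY.2 (by rw [h]; exact hz₀.1))]
        -- then e ∈ cl {x, z₀} and z ∈ cl {x, z₀} : contradiction
        have heL : e ∈ M.closure {x, z₀} := by
          have h5 := mem_closure_sb hs hbs he
          rw [hsbse] at h5
          refine M.closure_subset_closure_of_subset_closure ?_ h5
          refine insert_subset hycl (singleton_subset_iff.mpr
            (M.subset_closure _ (insert_subset hxE (by simpa using hz₀E)) (by simp)))
        have henx : e ∉ M.closure {x} := fun h =>
          h3 ((eq_of_mem_closure_singleton hs he hxE h) ▸ hx.1)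
        have hzcl : z ∈ M.closure (insert e {x}) := by
          refine M.mem_closure_insert henx ?_
          rwa [Set.pair_comm x z] at hecl2
        have hzL : z ∈ M.closure {x, z₀} := by
          refine M.closure_subset_closure_of_subset_closure ?_ hzcl
          exact insert_subset heL (singleton_subset_iff.mpr
            (M.subset_closure _ (insert_subset hxE (by simpa using hz₀E)) (mem_insert x _)))
        have : sb M b z ⊆ {x, z₀} :=
          (mem_closure_iff_sb hs hb hzE (insert_subset hx.1 (by simpa using hz₀.1))).1 hzL
        rw [sb_of_mem hb hz.1] at this
        rcases this rfl with h | h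
        · exact hxz h.symm
        · simp only [mem_singleton_iff] at h; exact hne h
      subst hzz₀
      -- now e ∈ cl {y, z}
      have hxcl2 : x ∈ M.closure (insert y {z}) := by
        refine M.mem_closure_insert (fun h =>
          hyY.2 (by rw [eq_of_mem_closure_singleton hs hyE hzE h]; exact hz.1)) ?_
        exact hycl
      have hecl3 : e ∈ M.closure {y, z} := by
        refine M.closure_subset_closure_of_subset_closure ?_ hecl2
        refine insert_subset hxcl2 (singleton_subset_iff.mpr
          (M.subset_closure _ (insert_subset hyE (by simpa using hzE)) (by simp)))
      have hsub : sb M bs e ⊆ {y, z} :=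
        (mem_closure_iff_sb hs hbs he (insert_subset hyY.1 (by simpa using hz.2))).1 hecl3
      refine Set.eq_of_subset_of_ncard_le hsub ?_ ((finite_singleton z).insert y)
      rw [sb_ncard_of_not_mem hs hbs he h4,
        Set.ncard_pair (fun h => hyY.2 (by rw [h]; exact hz.1))]
    -- case analysis on the pair {i, j}
    by_cases hibs : i ∈ bs
    · by_cases hjbs : j ∈ bs
      · -- both in b ∩ bs
        have hsub : sb M bs e ⊆ {i, j} :=
          (mem_closure_iff_sb hs hbs he (insert_subset hibs (by simpa using hjbs))).1 hecl
        have heq : sb M bs e = {i, j} := by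
          refine Set.eq_of_subset_of_ncard_le hsub ?_ ((finite_singleton j).insert i)
          rw [sb_ncard_of_not_mem hs hbs he h4, Set.ncard_pair hij]
        rw [heq, hsbe, Set.image_pair, hφc i ⟨hi, hibs⟩, hφc j ⟨hj, hjbs⟩]
      · -- j ∈ X, i ∈ c
        have hecl2 : e ∈ M.closure {j, i} := by rwa [Set.pair_comm] at hecl
        have := mixed j i ⟨hj, hjbs⟩ ⟨hi, hibs⟩ hij.symm hecl2
        rw [hsbe, Set.image_pair, hφc i ⟨hi, hibs⟩, this, Set.pair_comm]
    · by_cases hjbs : j ∈ bs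
      · -- i ∈ X, j ∈ c
        have := mixed i j ⟨hi, hibs⟩ ⟨hj, hjbs⟩ hij hecl
        rw [hsbe, Set.image_pair, hφc j ⟨hj, hjbs⟩, this]
      · -- both in X
        have hx : i ∈ b \ bs := ⟨hi, hibs⟩
        have hx' : j ∈ b \ bs := ⟨hj, hjbs⟩
        obtain ⟨z₀, hz₀, hsbsi, hsbyi⟩ := hpart i hx
        obtain ⟨z₀', hz₀', hsbsj, hsbyj⟩ := hpart j hx'
        set y := φ i with hydef
        set y' := φ j with hy'def
        have hyY : y ∈ bs \ b := hφXY i hx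
        have hy'Y : y' ∈ bs \ b := hφXY j hx'
        have hyy' : y ≠ y' := by
          intro h
          have h1 : φ y = i := hφinvX i hx
          have h2 : φ y' = j := hφinvX j hx'
          rw [h] at h1
          exact hij (h1 ▸ h2.symm ▸ rfl)
        have hyE : y ∈ M.E := hbsE hyY.1
        have hy'E : y' ∈ M.E := hbsE hy'Y.1
        -- y ∈ sbs e
        have heni : e ∉ M.closure {i} := fun h =>
          h3 ((eq_of_mem_closure_singleton hs he hiE h) ▸ hi)
        have henj : e ∉ M.closure {j} := fun h =>
          h3 ((eq_of_mem_closure_singleton hs he hjE h) ▸ hj)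
        have hicl : i ∈ M.closure (insert e {j}) := by
          refine M.mem_closure_insert henj ?_
          exact hecl
        have hjcl : j ∈ M.closure (insert e {i}) := by
          refine M.mem_closure_insert heni ?_
          rwa [Set.pair_comm] at hecl
        have hsubi : sb M bs i ⊆ sb M bs e ∪ sb M bs j :=
          sb_subset_of_closure_pair hs hbs hiE he hjE hicl
        have hsubj : sb M bs j ⊆ sb M bs e ∪ sb M bs i :=
          sb_subset_of_closure_pair hs hbs hjE he hiE hjcl
        rw [hsbsi, hsbsj] at hsubi hsubj
        have hy_in : y ∈ sb M bs e := by
          rcases hsubi (mem_insert y _) with h | h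
          · exact h
          · exfalso
            rcases h with h | h
            · exact hyy' h
            · simp only [mem_singleton_iff] at h
              exact hyY.2 (h ▸ hz₀'.1)
        have hy'_in : y' ∈ sb M bs e := by
          rcases hsubj (mem_insert y' _) with h | h
          · exact h
          · exfalso
            rcases h with h | h
            · exact hyy' h.symm
            · simp only [mem_singleton_iff] at h
              exact hy'Y.2 (h ▸ hz₀.1)
        have heq : sb M bs e = {y, y'} := by
          have hsub2 : ({y, y'} : Set α) ⊆ sb M bs e := by
            intro t ht
            rcases ht with rfl | ht
            · exact hy_in
            · simp only [mem_singleton_iff] at ht; subst ht; exact hy'_in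
          refine (Set.eq_of_subset_of_ncard_le hsub2 ?_ (sb_finite hfin hbs e)).symm
          rw [sb_ncard_of_not_mem hs hbs he h4, Set.ncard_pair hyy']
        rw [heq, hsbe, Set.image_pair]
  · exact fun x hx => ⟨hφXY x hx, hpart x hx⟩

lemma SuppB_insert (M : Matroid α) (b : Set α) (x : α) (S : Set α) :
    SuppB M b (insert x S) = sb M b x ∪ SuppB M b S := by
  simp [SuppB, Set.biUnion_insert]

namespace Ctx

variable {φ : α → α}

/-- β-lemma: closure transfer for independent sets avoiding `b`. -/
lemma beta (hc : Ctx M b bs φ) {D : Set α} (hind : M.Indep D)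
    (hDb : D ∩ b = ∅) {x : α} (hx : x ∈ b \ bs) (hcl : x ∈ M.closure D) :
    φ x ∈ M.closure D := by
  classical
  have hfin := hc.fin
  have hs := hc.simple
  have hb := hc.crb
  have hbs := hc.crbs
  have hD : D ⊆ M.E := hind.subset_ground
  have hbE : b ⊆ M.E := hb.1.subset_ground
  have hxE : x ∈ M.E := hbE hx.1
  -- extract a minimal subset D' of D with x ∈ cl D'
  set Ns : Set ℕ := {n | ∃ D', D' ⊆ D ∧ x ∈ M.closure D' ∧ D'.ncard = n} with hNs
  have hNsne : Ns.Nonempty := ⟨D.ncard, D, subset_refl _, hcl, rfl⟩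
  obtain ⟨D', hD'sub, hxD', hcardD'⟩ := Nat.sInf_mem hNsne
  have hD'fin : D'.Finite := (hfin.subset hD).subset hD'sub
  have hmin : ∀ u ∈ D', x ∉ M.closure (D' \ {u}) := by
    intro u hu hbad
    have h1 : (D' \ {u}).ncard ∈ Ns := ⟨D' \ {u}, diff_subset.trans hD'sub, hbad, rfl⟩
    have h2 := Nat.sInf_le h1
    have h3 : (D' \ {u}).ncard < D'.ncard := Set.ncard_diff_singleton_lt_of_mem hu hD'fin
    omega
  have hD'ind : M.Indep D' := hind.subset hD'sub
  have hD'E : D' ⊆ M.E := hD'sub.trans hD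
  have hxD'' : x ∉ D' := fun h => by
    have : x ∈ D ∩ b := ⟨hD'sub h, hx.1⟩
    rw [hDb] at this; exact this
  set C : Set α := insert x D' with hC
  have hCE : C ⊆ M.E := insert_subset hxE hD'E
  have hCfin : C.Finite := hfin.subset hCE
  -- every support element is covered twice in C
  have hxsupp : sb M b x ⊆ SuppB M b D' :=
    sb_subset_SuppB_of_mem_closure hs hb hxE hD'E hxD'
  have hcov : ∀ u ∈ C, ∀ v ∈ sb M b u, ∃ u' ∈ C, u' ≠ u ∧ v ∈ sb M b u' := by
    intro u hu v hv
    rcases hu with rfl | hu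
    · -- u = x
      obtain ⟨e', he', hv'⟩ := mem_SuppB_iff.1 (hxsupp hv)
      exact ⟨e', Or.inr he', fun h => hxD'' (h ▸ he'), hv'⟩
    · -- u ∈ D' : exchange
      have h1 : x ∈ M.closure (insert u (D' \ {u})) := by
        rwa [Set.insert_diff_singleton, Set.insert_eq_of_mem hu]
      have h2 : u ∈ M.closure (insert x (D' \ {u})) :=
        M.mem_closure_insert (hmin u hu) h1
      have h3 : sb M b u ⊆ SuppB M b (insert x (D' \ {u})) :=
        sb_subset_SuppB_of_mem_closure hs hb (hD'E hu)
          (insert_subset hxE (diff_subset.trans hD'E)) h2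
      obtain ⟨e', he', hv'⟩ := mem_SuppB_iff.1 (h3 hv)
      rcases he' with rfl | he'
      · exact ⟨e', Or.inl rfl, fun h => hxD'' (h.symm ▸ hu), hv'⟩
      · exact ⟨e', Or.inr he'.1, fun h => he'.2 (by simp [h]), hv'⟩
  have hdc := double_count hCfin (sb M b) (fun u _ => sb_finite hfin hb u) hcov
  have hsum := sum_sb_ncard hfin hs hb hCE
  -- identify the union with SuppB
  have hU : (⋃ u ∈ C, sb M b u) = SuppB M b C := rfl
  have hCb : C ∩ b = {x} := by
    ext t
    simp only [hC, mem_inter_iff, mem_insert_iff, mem_singleton_iff]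
    constructor
    · rintro ⟨rfl | ht, htb⟩
      · rfl
      · exfalso; have : t ∈ D ∩ b := ⟨hD'sub ht, htb⟩; rw [hDb] at this; exact this
    · rintro rfl; exact ⟨Or.inl rfl, hx.1⟩
  have hCcard : C.ncard = D'.ncard + 1 := Set.ncard_insert_of_notMem hxD'' hD'fin
  have hle : 2 * (SuppB M b C).ncard ≤ 2 * D'.ncard + 1 := by
    rw [hU] at hdc
    have : (C ∩ b).ncard = 1 := by rw [hCb]; simp
    omega
  have hSuppC : SuppB M b C = SuppB M b D' := by
    rw [hC, SuppB_insert]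
    rw [sb_of_mem hb hx.1]
    have : x ∈ SuppB M b D' := hxsupp (by rw [sb_of_mem hb hx.1]; exact rfl)
    rw [Set.union_eq_self_of_subset_left (singleton_subset_iff.mpr this)]
  have htight1 : (SuppB M b D').ncard ≤ D'.ncard := by
    rw [hSuppC] at hle; omega
  have htight2 : D'.ncard ≤ (SuppB M b D').ncard := ncard_le_SuppB hfin hs hb hD'ind
  -- tightness gives that the supports are spanned by D'
  have hspan : SuppB M b D' ⊆ M.closure D' := by
    refine tight_span hfin (hb.1.indep.subset (SuppB_subset M b D')) hD'ind
      (subset_closure_SuppB hs hb hD'E) ?_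
    omega
  -- partner data
  obtain ⟨hxy, z, hz, hsbsx, hsby⟩ := hc.partner x hx
  -- z ∈ SuppB M b D'
  have hzsupp : z ∈ SuppB M b D' := by
    -- x ∈ cl D' gives sbs x ⊆ SuppB M bs D'
    have h1 : sb M bs x ⊆ SuppB M bs D' :=
      sb_subset_SuppB_of_mem_closure hs hbs hxE hD'E hxD'
    have h2 : z ∈ SuppB M bs D' := h1 (by rw [hsbsx]; simp)
    obtain ⟨u, hu, hzu⟩ := mem_SuppB_iff.1 h2
    have hub : u ∉ b := fun h => by
      have : u ∈ D ∩ b := ⟨hD'sub hu, h⟩; rw [hDb] at this; exact this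
    by_cases hubs : u ∈ bs
    · rw [sb_of_mem hbs hubs] at hzu
      simp only [mem_singleton_iff] at hzu
      exact absurd (hzu ▸ hz.1 : u ∈ b) hub
    · have hfixu : φ u = u := hc.hfix u (hD'E hu) hub hubs
      have hsupp := hc.suppid u (hD'E hu)
      rw [hfixu] at hsupp
      rw [hsupp] at hzu
      obtain ⟨t, ht, htz⟩ := hzu
      have htb : t ∈ b := (sb_subset M b u) ht
      by_cases htbs : t ∈ bs
      · have : φ t = t := hc.fixc t ⟨htb, htbs⟩
        rw [this] at htz
        subst htz
        exact mem_SuppB_iff.2 ⟨u, hu, ht⟩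
      · have : φ t ∈ bs \ b := hc.mapXY ⟨htb, htbs⟩
        rw [htz] at this
        exact absurd hz.1 this.2
  have hxsupp2 : x ∈ SuppB M b D' := hxsupp (by rw [sb_of_mem hb hx.1]; exact rfl)
  -- conclude : φ x ∈ cl {x, z} ⊆ cl D'
  have hycl : φ x ∈ M.closure {x, z} := by
    have := mem_closure_sb hs hb (hc.hmem x hxE)
    rwa [hsby] at this
  have hsub : ({x, z} : Set α) ⊆ M.closure D' :=
    insert_subset (hspan hxsupp2) (singleton_subset_iff.mpr (hspan hzsupp))
  have : φ x ∈ M.closure D' := M.closure_subset_closure_of_subset_closure hsub hycl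
  exact M.closure_subset_closure hD'sub this

end Ctx

namespace Ctx

variable {φ : α → α}

lemma injOn (hc : Ctx M b bs φ) : Set.InjOn φ M.E := by
  intro u hu v hv h
  have h1 := hc.hinv u hu
  have h2 := hc.hinv v hv
  rw [← h1, ← h2, h]

lemma mem_image_iff (hc : Ctx M b bs φ) {A : Set α} (hA : A ⊆ M.E) {a : α} (ha : a ∈ M.E) :
    φ a ∈ φ '' A ↔ a ∈ A := by
  constructor
  · rintro ⟨t, ht, hta⟩
    rwa [hc.injOn (hA ht) ha hta] at ht
  · exact fun h => ⟨a, h, rfl⟩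

lemma SuppB_image (hc : Ctx M b bs φ) {T : Set α} (hT : T ⊆ M.E) :
    SuppB M bs (φ '' T) = φ '' SuppB M b T := by
  ext v
  simp only [SuppB, mem_iUnion, mem_image]
  constructor
  · rintro ⟨u', ⟨u, hu, rfl⟩, hv⟩
    rw [hc.suppid u (hT hu)] at hv
    obtain ⟨t, ht, htv⟩ := hv
    exact ⟨t, ⟨u, hu, ht⟩, htv⟩
  · rintro ⟨t, ⟨u, hu, ht⟩, htv⟩
    refine ⟨φ u, ⟨u, hu, rfl⟩, ?_⟩
    rw [hc.suppid u (hT hu)]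
    exact ⟨t, ht, htv⟩

/-- The second transfer lemma, entering the final independence argument. -/
lemma beta2 (hc : Ctx M b bs φ) {S : Set α} (hS : M.Indep S) (hSb : S ∩ b = ∅)
    {y : α} (hy : y ∈ bs \ b) (hyS : y ∈ S)
    (hT : M.Indep (insert y (φ '' (S \ {y}))))
    (hxcl : φ y ∈ M.closure (φ '' (S \ {y}))) : False := by
  classical
  have hfin := hc.fin
  have hs := hc.simple
  have hb := hc.crb
  have hbs := hc.crbs
  have hbE : b ⊆ M.E := hb.1.subset_ground
  have hbsE : bs ⊆ M.E := hbs.1.subset_ground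
  have hSE : S ⊆ M.E := hS.subset_ground
  have hyE : y ∈ M.E := hbsE hy.1
  set x : α := φ y with hxdef
  have hxX : x ∈ b \ bs := hc.mapYX hy
  have hxE : x ∈ M.E := hbE hxX.1
  have hphiy : φ x = y := by rw [hxdef, hc.hinv y hyE]
  -- partner data for x (with z₀)
  obtain ⟨hxy2, z₀, hz₀, hsbsx, hsby⟩ := hc.partner x hxX
  rw [hphiy] at hsbsx hsby
  set Dst : Set α := φ '' (S \ {y}) with hDst
  have hDstE : Dst ⊆ M.E := by
    rintro u ⟨t, ht, rfl⟩
    exact hc.hmem t (hSE ht.1)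
  have hDstind : M.Indep Dst := hT.subset (subset_insert _ _)
  -- elements of Dst are not in bs
  have hDstbs : ∀ u ∈ Dst, u ∉ bs := by
    rintro u ⟨t, ht, rfl⟩ hubs
    have htE : t ∈ M.E := hSE ht.1
    by_cases htb : t ∈ b
    · have : t ∈ S ∩ b := ⟨ht.1, htb⟩
      rw [hSb] at this; exact this
    by_cases htbs : t ∈ bs
    · exact (hc.mapYX ⟨htbs, htb⟩).2 hubs
    · rw [hc.hfix t htE htb htbs] at hubs; exact htbs hubs
  -- elements of Dst in b come from S ∩ (bs \ b)
  have hDstb : ∀ u ∈ Dst, u ∈ b → φ u ∈ S ∩ (bs \ b) ∧ φ u ≠ y ∧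
      ∃ zu ∈ b ∩ bs, sb M bs u = {φ u, zu} := by
    rintro u ⟨t, ht, rfl⟩ hub
    have htE : t ∈ M.E := hSE ht.1
    by_cases htb : t ∈ b
    · exfalso; have : t ∈ S ∩ b := ⟨ht.1, htb⟩; rw [hSb] at this; exact this
    by_cases htbs : t ∈ bs
    · have htY : t ∈ bs \ b := ⟨htbs, htb⟩
      have h1 : φ t ∈ b \ bs := hc.mapYX htY
      have h2 : φ (φ t) = t := hc.hinv t htE
      obtain ⟨_, zu, hzu, hsbs, _⟩ := hc.partner (φ t) h1
      rw [h2] at hsbs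
      rw [h2]
      exact ⟨⟨ht.1, htY⟩, fun h => ht.2 (by simpa using h), zu, hzu, hsbs⟩
    · exfalso; rw [hc.hfix t htE htb htbs] at hub; exact htb hub
  -- elements of Dst not in b: fixed elements of S
  have hDstnb : ∀ u ∈ Dst, u ∉ b → u ∈ S ∧ u ∉ bs ∧ φ u = u := by
    rintro u ⟨t, ht, rfl⟩ hub
    have htE : t ∈ M.E := hSE ht.1
    by_cases htb : t ∈ b
    · exfalso; have : t ∈ S ∩ b := ⟨ht.1, htb⟩; rw [hSb] at this; exact this
    by_cases htbs : t ∈ bs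
    · exact absurd (hc.mapYX ⟨htbs, htb⟩).1 hub
    · rw [hc.hfix t htE htb htbs] at hub ⊢
      rw [hc.hfix t htE htb htbs]
      exact ⟨ht.1, htbs, rfl⟩
  have hyDst : y ∉ Dst := fun h => (hDstbs y h) hy.1
  -- minimal D' ⊆ Dst with x ∈ cl D'
  set Ns : Set ℕ := {n | ∃ D', D' ⊆ Dst ∧ x ∈ M.closure D' ∧ D'.ncard = n} with hNs
  have hNsne : Ns.Nonempty := ⟨Dst.ncard, Dst, subset_refl _, hxcl, rfl⟩
  obtain ⟨D', hD'sub, hxD', hcardD'⟩ := Nat.sInf_mem hNsne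
  have hD'E : D' ⊆ M.E := hD'sub.trans hDstE
  have hD'fin : D'.Finite := hfin.subset hD'E
  have hD'ind : M.Indep D' := hDstind.subset hD'sub
  have hmin : ∀ u ∈ D', x ∉ M.closure (D' \ {u}) := by
    intro u hu hbad
    have h1 : (D' \ {u}).ncard ∈ Ns := ⟨D' \ {u}, diff_subset.trans hD'sub, hbad, rfl⟩
    have h2 := Nat.sInf_le h1
    have h3 : (D' \ {u}).ncard < D'.ncard := Set.ncard_diff_singleton_lt_of_mem hu hD'fin
    omega
  have hxDst : x ∉ Dst := by
    intro h
    obtain ⟨h1, h2, _⟩ := hDstb x h hxX.1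
    exact h2 hphiy
  have hxD'' : x ∉ D' := fun h => hxDst (hD'sub h)
  set C : Set α := insert x D' with hCdef
  have hCE : C ⊆ M.E := insert_subset hxE hD'E
  have hCfin : C.Finite := hfin.subset hCE
  have hCcard : C.ncard = D'.ncard + 1 := Set.ncard_insert_of_notMem hxD'' hD'fin
  have hexch : ∀ u ∈ D', u ∈ M.closure (insert x (D' \ {u})) := by
    intro u hu
    have h1 : x ∈ M.closure (insert u (D' \ {u})) := by
      rwa [Set.insert_diff_singleton, Set.insert_eq_of_mem hu]
    exact M.mem_closure_insert (hmin u hu) h1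
  have hcovgen : ∀ (bb : Set α), IsCremonaBasis M bb →
      ∀ u ∈ C, ∀ v ∈ sb M bb u, ∃ u' ∈ C, u' ≠ u ∧ v ∈ sb M bb u' := by
    intro bb hbb u hu v hv
    rcases (mem_insert_iff.mp hu) with heq | hu2
    · subst heq
      have hsupp : sb M bb x ⊆ SuppB M bb D' :=
        sb_subset_SuppB_of_mem_closure hs hbb hxE hD'E hxD'
      obtain ⟨e', he', hv'⟩ := mem_SuppB_iff.1 (hsupp hv)
      exact ⟨e', Or.inr he', fun h => hxD'' (h ▸ he'), hv'⟩
    · have h3 : sb M bb u ⊆ SuppB M bb (insert x (D' \ {u})) :=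
        sb_subset_SuppB_of_mem_closure hs hbb (hD'E hu2)
          (insert_subset hxE (diff_subset.trans hD'E)) (hexch u hu2)
      obtain ⟨e', he', hv'⟩ := mem_SuppB_iff.1 (h3 hv)
      rcases (mem_insert_iff.mp he') with heq | he'2
      · subst heq
        exact ⟨x, Or.inl rfl, fun h => hxD'' (by rw [h]; exact hu2), hv'⟩
      · exact ⟨e', Or.inr he'2.1, fun h => he'2.2 (by simp [h]), hv'⟩
  -- b-side counting
  have hdcb := double_count (hfin.subset hCE) (sb M b)
    (fun u _ => sb_finite hfin hb u) (hcovgen b hb)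
  have hsumb := sum_sb_ncard hfin hs hb hCE
  have hxsuppb : sb M b x ⊆ SuppB M b D' :=
    sb_subset_SuppB_of_mem_closure hs hb hxE hD'E hxD'
  have hUb : (⋃ u ∈ C, sb M b u) = SuppB M b C := rfl
  have hSuppCb : SuppB M b C = SuppB M b D' := by
    rw [hCdef, SuppB_insert]
    exact union_eq_self_of_subset_left hxsuppb
  have hCbcard : (C ∩ b).ncard = (D' ∩ b).ncard + 1 := by
    have h1 : C ∩ b = insert x (D' ∩ b) := by
      rw [hCdef, Set.insert_inter_of_mem hxX.1]
    rw [h1, Set.ncard_insert_of_notMem (fun h => hxD'' h.1)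
      (hD'fin.subset inter_subset_left)]
  have hbge : D'.ncard ≤ (SuppB M b D').ncard := ncard_le_SuppB hfin hs hb hD'ind
  have hble : (SuppB M b D').ncard ≤ D'.ncard := by
    rw [hUb, hSuppCb] at hdcb
    omega
  have hk1 : (D' ∩ b).ncard ≤ 1 := by
    rw [hUb, hSuppCb] at hdcb
    omega
  have hspanb : SuppB M b D' ⊆ M.closure D' := by
    refine tight_span hfin (hb.1.indep.subset (SuppB_subset M b D')) hD'ind
      (subset_closure_SuppB hs hb hD'E) ?_
    omega
  -- bs-side counting
  have hdcbs := double_count (hfin.subset hCE) (sb M bs)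
    (fun u _ => sb_finite hfin hbs u) (hcovgen bs hbs)
  have hsumbs := sum_sb_ncard hfin hs hbs hCE
  have hsbsxsupp : sb M bs x ⊆ SuppB M bs D' :=
    sb_subset_SuppB_of_mem_closure hs hbs hxE hD'E hxD'
  have hUbs : (⋃ u ∈ C, sb M bs u) = SuppB M bs C := rfl
  have hSuppCbs : SuppB M bs C = SuppB M bs D' := by
    rw [hCdef, SuppB_insert]
    exact union_eq_self_of_subset_left hsbsxsupp
  have hCbs : C ∩ bs = ∅ := by
    ext t
    simp only [mem_inter_iff, mem_empty_iff_false, iff_false, not_and]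
    intro ht
    rcases (mem_insert_iff.mp ht) with rfl | ht2
    · exact hxX.2
    · exact hDstbs t (hD'sub ht2)
  have hstar : (SuppB M bs D').ncard ≤ D'.ncard + 1 := by
    rw [hUbs, hSuppCbs] at hdcbs
    rw [hCbs] at hsumbs
    simp only [Set.ncard_empty] at hsumbs
    omega
  -- z₀ is covered on the bs side
  have hz0supp : z₀ ∈ SuppB M bs D' := hsbsxsupp (by rw [hsbsx]; simp)
  have hz0E : z₀ ∈ M.E := hbE hz₀.1
  -- a cover of z₀ by a non-b element would put z₀ in the b-side support
  have hforce : ∀ u ∈ D', z₀ ∈ sb M bs u → u ∉ b → z₀ ∈ SuppB M b D' := by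
    intro u hu hz0u hub
    obtain ⟨huS, hubs, hufix⟩ := hDstnb u (hD'sub hu) hub
    have huE : u ∈ M.E := hSE huS
    have hsupp := hc.suppid u huE
    rw [hufix] at hsupp
    rw [hsupp] at hz0u
    obtain ⟨t, ht, htz⟩ := hz0u
    have htb : t ∈ b := (sb_subset M b u) ht
    by_cases htbs : t ∈ bs
    · have : φ t = t := hc.fixc t ⟨htb, htbs⟩
      rw [this] at htz
      subst htz
      exact mem_SuppB_iff.2 ⟨u, hu, ht⟩
    · have : φ t ∈ bs \ b := hc.mapXY ⟨htb, htbs⟩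
      rw [htz] at this
      exact absurd hz₀.1 this.2
  have hycl : y ∈ M.closure {x, z₀} := by
    have := mem_closure_sb hs hb hyE
    rwa [hsby] at this
  by_cases hGOOD : z₀ ∈ SuppB M b D'
  · -- GOOD case : y ∈ cl D' ⊆ cl Dst, contradicting independence of insert y Dst
    have hxsupp2 : x ∈ SuppB M b D' := hxsuppb (by rw [sb_of_mem hb hxX.1]; exact rfl)
    have hsub : ({x, z₀} : Set α) ⊆ M.closure D' :=
      insert_subset (hspanb hxsupp2) (singleton_subset_iff.mpr (hspanb hGOOD))
    have hyclD : y ∈ M.closure Dst :=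
      M.closure_subset_closure hD'sub
        (M.closure_subset_closure_of_subset_closure hsub hycl)
    have := hT.notMem_closure_diff_of_mem (mem_insert y Dst)
    rw [Set.insert_diff_self_of_notMem hyDst] at this
    exact this hyclD
  · -- BAD case
    obtain ⟨x₂, hx₂D', hz0x₂⟩ := mem_SuppB_iff.1 hz0supp
    have hx₂b : x₂ ∈ b := by
      by_contra hx₂b
      exact hGOOD (hforce x₂ hx₂D' hz0x₂ hx₂b)
    obtain ⟨hy₂S, hy₂y, z₂, hz₂, hsbsx₂⟩ := hDstb x₂ (hD'sub hx₂D') hx₂b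
    set y₂ : α := φ x₂ with hy₂def
    have hz0z₂ : z₀ = z₂ := by
      rw [hsbsx₂] at hz0x₂
      rcases (mem_insert_iff.mp hz0x₂) with h | h
      · exact absurd (h ▸ hz₀.1 : y₂ ∈ b) hy₂S.2.2
      · simpa using h
    subst hz0z₂
    have hDb2 : D' ∩ b = {x₂} := by
      have hsub1 : D' ∩ b ⊆ {x₂} := by
        intro u hu
        have := (Set.ncard_le_one (hD'fin.subset inter_subset_left)).1 hk1
          u hu x₂ ⟨hx₂D', hx₂b⟩
        simpa using this
      exact hsub1.antisymm (by simp [hx₂D', hx₂b])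
    set Q : Set α := SuppB M bs (D' \ {x₂}) with hQdef
    have hQfin : Q.Finite := (hfin.subset hbsE).subset (SuppB_subset M bs _)
    have hsplit : SuppB M bs D' = sb M bs x₂ ∪ Q := by
      conv_lhs => rw [show D' = insert x₂ (D' \ {x₂}) by
        rw [Set.insert_diff_singleton, Set.insert_eq_of_mem hx₂D']]
      rw [SuppB_insert]
    -- y ∈ Q
    have hyQ : y ∈ Q := by
      have h1 : y ∈ SuppB M bs D' := hsbsxsupp (by rw [hsbsx]; exact mem_insert y _)
      obtain ⟨u, hu, hyu⟩ := mem_SuppB_iff.1 h1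
      have hux₂ : u ≠ x₂ := by
        intro h
        subst h
        rw [hsbsx₂] at hyu
        rcases (mem_insert_iff.mp hyu) with h | h
        · exact hy₂y h.symm
        · simp only [mem_singleton_iff] at h
          exact hy.2 (h ▸ hz₀.1)
      exact mem_SuppB_iff.2 ⟨u, ⟨hu, hux₂⟩, hyu⟩
    -- z₀ ∉ Q
    have hz0Q : z₀ ∉ Q := by
      intro hz0Q
      obtain ⟨u, hu, hz0u⟩ := mem_SuppB_iff.1 hz0Q
      by_cases hub : u ∈ b
      · have : u ∈ D' ∩ b := ⟨hu.1, hub⟩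
        rw [hDb2] at this
        exact hu.2 this
      · exact hGOOD (hforce u hu.1 hz0u hub)
    -- cardinality of SuppB bs D'
    have hz₀y₂ : z₀ ≠ y₂ := fun h => hy₂S.2.2 (h ▸ hz₀.1)
    have hsplit2 : SuppB M bs D' = insert z₀ (insert y₂ Q) := by
      rw [hsplit, hsbsx₂]
      ext t
      simp only [mem_union, mem_insert_iff, mem_singleton_iff]
      tauto
    have hz0notin : z₀ ∉ insert y₂ Q := by
      intro h
      rcases (mem_insert_iff.mp h) with h | h
      · exact hz₀y₂ h
      · exact hz0Q h
    have hcard2 : (SuppB M bs D').ncard = (insert y₂ Q).ncard + 1 := by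
      rw [hsplit2]
      exact Set.ncard_insert_of_notMem hz0notin (hQfin.insert y₂)
    -- the set R
    set R : Set α := insert y (insert y₂ (D' \ {x₂})) with hRdef
    have hDx₂S : D' \ {x₂} ⊆ S := by
      intro u hu
      have hub : u ∉ b := by
        intro hub
        have : u ∈ D' ∩ b := ⟨hu.1, hub⟩
        rw [hDb2] at this
        exact hu.2 this
      exact (hDstnb u (hD'sub hu.1) hub).1
    have hRS : R ⊆ S := by
      rw [hRdef]
      exact insert_subset hyS (insert_subset hy₂S.1 hDx₂S)
    have hRind : M.Indep R := hS.subset hRS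
    have hy₂nD : y₂ ∉ D' \ {x₂} := by
      intro h
      exact hDstbs y₂ (hD'sub h.1) hy₂S.2.1
    have hynD : y ∉ insert y₂ (D' \ {x₂}) := by
      intro h
      rcases (mem_insert_iff.mp h) with h | h
      · exact hy₂y h.symm
      · exact hyDst (hD'sub h.1)
    have hRcard : R.ncard = D'.ncard + 1 := by
      rw [hRdef, Set.ncard_insert_of_notMem hynD (hD'fin.diff.insert y₂),
        Set.ncard_insert_of_notMem hy₂nD hD'fin.diff,
        Set.ncard_diff_singleton_of_mem hx₂D']
      have : 0 < D'.ncard := (Set.ncard_pos hD'fin).2 ⟨x₂, hx₂D'⟩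
      omega
    -- bs-support of R
    have hSuppR : SuppB M bs R = insert y (insert y₂ Q) := by
      rw [hRdef, SuppB_insert, SuppB_insert, sb_of_mem hbs hy.1, sb_of_mem hbs hy₂S.2.1,
        Set.singleton_union, Set.singleton_union]
    have hSuppR2 : SuppB M bs R = insert y₂ Q := by
      rw [hSuppR]
      exact Set.insert_eq_of_mem (Set.mem_insert_of_mem y₂ hyQ)
    have hbound : R.ncard ≤ (SuppB M bs R).ncard := ncard_le_SuppB hfin hs hbs hRind
    rw [hSuppR2, hRcard] at hbound
    omega


end Ctx

/-- The main induction: a tight independent set has independent `φ`-image. -/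
lemma sp (hc : Ctx M b bs φ) : ∀ n : ℕ, ∀ S : Set α, M.Indep S →
    S.ncard = (SuppB M b S).ncard →
    S.ncard + (S ∩ (bs \ b)).ncard = n → M.Indep (φ '' S) := by
  have hfin := hc.fin
  have hs := hc.simple
  have hb := hc.crb
  have hbs := hc.crbs
  have hbE : b ⊆ M.E := hb.1.subset_ground
  have hbsE : bs ⊆ M.E := hbs.1.subset_ground
  intro n
  induction n using Nat.strong_induction_on with
  | _ n IH =>
  intro S hind htight hmeas
  have hSE : S ⊆ M.E := hind.subset_ground
  have hSfin : S.Finite := hfin.subset hSE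
  by_cases hcase : ∃ v ∈ SuppB M b S, ∃ u ∈ S, v ∈ sb M b u ∧
      ∀ u' ∈ S, v ∈ sb M b u' → u' = u
  · -- Case 1 : peel off an element covering a degree-one vertex
    obtain ⟨v, hvV, u, huS, hvu, huniq⟩ := hcase
    set S' : Set α := S \ {u} with hS'def
    have hS'sub : S' ⊆ S := diff_subset
    have hS'E : S' ⊆ M.E := hS'sub.trans hSE
    have hS'ind : M.Indep S' := hind.subset hS'sub
    have hvE : v ∈ M.E := hbE ((SuppB_subset M b S) hvV)
    have huE : u ∈ M.E := hSE huS
    have hvV' : v ∉ SuppB M b S' := by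
      intro h
      obtain ⟨u', hu', hvu'⟩ := mem_SuppB_iff.1 h
      exact hu'.2 (by simp [huniq u' hu'.1 hvu'])
    have hsupp' : SuppB M b S' ⊆ (SuppB M b S) \ {v} := by
      intro t ht
      obtain ⟨u', hu', htu'⟩ := mem_SuppB_iff.1 ht
      refine ⟨mem_SuppB_iff.2 ⟨u', hS'sub hu', htu'⟩, fun h => ?_⟩
      simp only [mem_singleton_iff] at h
      exact hvV' (h ▸ ht)
    have hVfin : (SuppB M b S).Finite := (hfin.subset hbE).subset (SuppB_subset M b S)
    have hcard1 : S'.ncard = S.ncard - 1 := Set.ncard_diff_singleton_of_mem huS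
    have hSpos : 0 < S.ncard := (Set.ncard_pos hSfin).2 ⟨u, huS⟩
    have hcard2 : (SuppB M b S').ncard ≤ S.ncard - 1 := by
      have h1 : (SuppB M b S').ncard ≤ ((SuppB M b S) \ {v}).ncard :=
        Set.ncard_le_ncard hsupp' hVfin.diff
      have h2 : ((SuppB M b S) \ {v}).ncard = (SuppB M b S).ncard - 1 :=
        Set.ncard_diff_singleton_of_mem hvV
      omega
    have hcard3 : S'.ncard ≤ (SuppB M b S').ncard := ncard_le_SuppB hfin hs hb hS'ind
    have htight' : S'.ncard = (SuppB M b S').ncard := by omega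
    have hmeas' : S'.ncard + (S' ∩ (bs \ b)).ncard < n := by
      have h1 : (S' ∩ (bs \ b)).ncard ≤ (S ∩ (bs \ b)).ncard :=
        Set.ncard_le_ncard (inter_subset_inter_left _ hS'sub)
          (hSfin.subset inter_subset_left)
      omega
    have hphi' : M.Indep (φ '' S') := IH _ hmeas' S' hS'ind htight' rfl
    have hSsplit : S = insert u S' := by
      rw [hS'def, Set.insert_diff_singleton, Set.insert_eq_of_mem huS]
    have hnotmem : φ u ∉ φ '' S' := by
      rintro ⟨u', hu', hequ⟩
      exact hu'.2 (by simp [hc.injOn (hS'E hu') huE hequ])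
    have hnotcl : φ u ∉ M.closure (φ '' S') := by
      intro h
      have hφS'E : φ '' S' ⊆ M.E := by
        rintro t ⟨t', ht', rfl⟩
        exact hc.hmem t' (hS'E ht')
      have h1 : sb M bs (φ u) ⊆ SuppB M bs (φ '' S') :=
        sb_subset_SuppB_of_mem_closure hs hbs (hc.hmem u huE) hφS'E h
      rw [hc.suppid u huE, hc.SuppB_image hS'E] at h1
      have h2 : φ v ∈ φ '' SuppB M b S' := h1 ⟨v, hvu, rfl⟩
      rw [hc.mem_image_iff (fun t ht => hbE ((SuppB_subset M b S') ht)) hvE] at h2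
      exact hvV' h2
    rw [hSsplit, Set.image_insert_eq]
    rw [hphi'.insert_indep_iff_of_notMem hnotmem]
    exact ⟨hc.hmem u huE, hnotcl⟩
  · -- Case 2 : every vertex is covered twice
    push_neg at hcase
    have hcov : ∀ u ∈ S, ∀ v ∈ sb M b u, ∃ u' ∈ S, u' ≠ u ∧ v ∈ sb M b u' := by
      intro u hu v hv
      obtain ⟨u', hu', hvu', hne⟩ := hcase v ((sb_subset_SuppB M b hu) hv) u hu hv
      exact ⟨u', hu', hne, hvu'⟩
    have hdc := double_count (hfin.subset hSE) (sb M b)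
      (fun u _ => sb_finite hfin hb u) hcov
    have hsum := sum_sb_ncard hfin hs hb hSE
    have hU : (⋃ u ∈ S, sb M b u) = SuppB M b S := rfl
    have hSb : S ∩ b = ∅ := by
      rw [hU] at hdc
      have : (S ∩ b).ncard = 0 := by omega
      exact ((Set.ncard_eq_zero (hSfin.subset inter_subset_left)).1 this)
    by_cases hSY : S ∩ (bs \ b) = ∅
    · -- no moving elements : φ fixes S pointwise
      have hfixS : ∀ u ∈ S, φ u = u := by
        intro u hu
        have hub : u ∉ b := fun h => by
          have : u ∈ S ∩ b := ⟨hu, h⟩; rw [hSb] at this; exact this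
        have hubs : u ∉ bs := by
          intro h
          have : u ∈ S ∩ (bs \ b) := ⟨hu, h, hub⟩
          rw [hSY] at this; exact this
        exact hc.hfix u (hSE hu) hub hubs
      have : φ '' S = S := by
        rw [Set.image_congr hfixS]
        exact Set.image_id S
      rwa [this]
    · obtain ⟨y, hyS, hyY⟩ : ∃ y, y ∈ S ∧ y ∈ bs \ b := by
        obtain ⟨y, hy⟩ := Set.nonempty_iff_ne_empty.2 hSY
        exact ⟨y, hy.1, hy.2⟩
      have hyE : y ∈ M.E := hSE hyS
      set x : α := φ y with hxdef
      have hxX : x ∈ b \ bs := hc.mapYX hyY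
      have hxE : x ∈ M.E := hbE hxX.1
      have hphiy : φ x = y := by rw [hxdef, hc.hinv y hyE]
      obtain ⟨_, z₀, hz₀, hsbsx, hsby⟩ := hc.partner x hxX
      rw [hphiy] at hsbsx hsby
      have hdiffb : (S \ {y}) ∩ b = ∅ := by
        rw [← Set.subset_empty_iff, ← hSb]
        exact inter_subset_inter_left _ diff_subset
      -- x is not spanned by S \ {y}
      have hxnot : x ∉ M.closure (S \ {y}) := by
        intro h
        have := hc.beta (hind.subset diff_subset) hdiffb hxX h
        rw [hphiy] at this
        exact hind.notMem_closure_diff_of_mem hyS this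
      set T : Set α := insert x (S \ {y}) with hTdef
      have hxSd : x ∉ S \ {y} := fun h => by
        have : x ∈ S ∩ b := ⟨h.1, hxX.1⟩; rw [hSb] at this; exact this
      have hTind : M.Indep T := by
        rw [hTdef, (hind.subset diff_subset).insert_indep_iff_of_notMem hxSd]
        exact ⟨hxE, hxnot⟩
      have hTE : T ⊆ M.E := hTind.subset_ground
      have hSpos : 0 < S.ncard := (Set.ncard_pos hSfin).2 ⟨y, hyS⟩
      have hTcard : T.ncard = S.ncard := by
        rw [hTdef, Set.ncard_insert_of_notMem hxSd hSfin.diff,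
          Set.ncard_diff_singleton_of_mem hyS]
        omega
      -- T is tight
      have hxV : x ∈ SuppB M b S := mem_SuppB_iff.2 ⟨y, hyS, by rw [hsby]; simp⟩
      have hsuppT : SuppB M b T ⊆ SuppB M b S := by
        rw [hTdef, SuppB_insert]
        refine union_subset ?_ ?_
        · rw [sb_of_mem hb hxX.1]
          exact singleton_subset_iff.mpr hxV
        · intro t ht
          obtain ⟨u', hu', htu'⟩ := mem_SuppB_iff.1 ht
          exact mem_SuppB_iff.2 ⟨u', hu'.1, htu'⟩
      have hVfin : (SuppB M b S).Finite := (hfin.subset hbE).subset (SuppB_subset M b S)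
      have htightT : T.ncard = (SuppB M b T).ncard := by
        have h1 : T.ncard ≤ (SuppB M b T).ncard := ncard_le_SuppB hfin hs hb hTind
        have h2 : (SuppB M b T).ncard ≤ (SuppB M b S).ncard :=
          Set.ncard_le_ncard hsuppT hVfin
        omega
      -- measure decreases
      have hyC : y ∈ S ∩ (bs \ b) := ⟨hyS, hyY⟩
      have hTY : T ∩ (bs \ b) = (S ∩ (bs \ b)) \ {y} := by
        rw [hTdef]
        ext t
        simp only [mem_inter_iff, mem_insert_iff, mem_diff, mem_singleton_iff]
        constructor
        · rintro ⟨rfl | ht, hmem⟩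
          · exact absurd hmem.1 hxX.2
          · exact ⟨⟨ht.1, hmem⟩, ht.2⟩
        · rintro ⟨⟨ht, hmem⟩, hne⟩
          exact ⟨Or.inr ⟨ht, hne⟩, hmem⟩
      have hmeasT : T.ncard + (T ∩ (bs \ b)).ncard < n := by
        rw [hTY, Set.ncard_diff_singleton_of_mem hyC]
        have hpos : 0 < (S ∩ (bs \ b)).ncard :=
          (Set.ncard_pos (hSfin.subset inter_subset_left)).2 ⟨y, hyC⟩
        omega
      have hphiT : M.Indep (φ '' T) := IH _ hmeasT T hTind htightT rfl
      have hTimg : φ '' T = insert y (φ '' (S \ {y})) := by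
        rw [hTdef, Set.image_insert_eq, hphiy]
      rw [hTimg] at hphiT
      -- x is not spanned by the image
      have hx2 : x ∉ M.closure (φ '' (S \ {y})) := by
        intro h
        exact hc.beta2 hind hSb hyY hyS hphiT h
      have hximg : x ∉ φ '' (S \ {y}) := by
        rintro ⟨u', hu', hequ⟩
        have : u' = y := hc.injOn (hSE hu'.1) hyE (by rw [hequ, hxdef])
        exact hu'.2 (by simp [this])
      have hSsplit : S = insert y (S \ {y}) := by
        rw [Set.insert_diff_singleton, Set.insert_eq_of_mem hyS]
      rw [hSsplit, Set.image_insert_eq, ← hxdef]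
      rw [(hphiT.subset (subset_insert _ _)).insert_indep_iff_of_notMem hximg]
      exact ⟨hxE, hx2⟩

/-- `φ` maps bases to bases. -/
lemma base_image {φ : α → α} (hc : Ctx M b bs φ) {B : Set α} (hB : M.IsBase B) : M.IsBase (φ '' B) := by
  have hfin := hc.fin
  have hs := hc.simple
  have hb := hc.crb
  have hbs := hc.crbs
  have hbE : b ⊆ M.E := hb.1.subset_ground
  have hBE : B ⊆ M.E := hB.subset_ground
  have hsupp : SuppB M b B = b := by
    refine (SuppB_subset M b B).antisymm ?_
    intro v hv
    have hvE : v ∈ M.E := hbE hv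
    have h1 : v ∈ M.closure B := by rw [hB.closure_eq]; exact hvE
    have h2 : sb M b v ⊆ SuppB M b B := sb_subset_SuppB_of_mem_closure hs hb hvE hBE h1
    rw [sb_of_mem hb hv] at h2
    exact h2 rfl
  have htight : B.ncard = (SuppB M b B).ncard := by
    rw [hsupp]
    exact hB.ncard_eq_ncard_of_isBase hb.1
  have hphiB : M.Indep (φ '' B) := sp hc _ B hB.indep htight rfl
  have hcard : (φ '' B).ncard = B.ncard := Set.ncard_image_of_injOn (hc.injOn.mono hBE)
  obtain ⟨B₂, hB₂, hsub⟩ := hphiB.exists_isBase_superset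
  have hcard2 : B₂.ncard = B.ncard := hB₂.ncard_eq_ncard_of_isBase hB
  have : φ '' B = B₂ :=
    Set.eq_of_subset_of_ncard_le hsub (by omega) (hfin.subset hB₂.subset_ground)
  rwa [this]

/-- `φ` preserves independence. -/
lemma indep_image {φ : α → α} (hc : Ctx M b bs φ) {I : Set α} (hI : M.Indep I) :
    M.Indep (φ '' I) := by
  obtain ⟨B, hB, hIB⟩ := hI.exists_isBase_superset
  exact (base_image hc hB).indep.subset (Set.image_mono hIB)

/-- The rank of the ground set equals the cardinality of any base. -/
lemma mrank_base (hfin : M.E.Finite) {B : Set α} (hB : M.IsBase B) :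
    mRank M M.E = B.ncard := by
  have hub : ∀ n ∈ {n | ∃ I, M.Indep I ∧ I ⊆ M.E ∧ I.ncard = n}, n ≤ B.ncard := by
    rintro n ⟨I, hI, hIE, rfl⟩
    exact indep_ncard_le hfin hI hB.indep (by rw [hB.closure_eq]; exact hIE)
  refine le_antisymm ?_ ?_
  · exact csSup_le ⟨B.ncard, B, hB.indep, hB.subset_ground, rfl⟩ hub
  · exact le_csSup ⟨B.ncard, hub⟩ ⟨B, hB.indep, hB.subset_ground, rfl⟩

end CremonaProof

open CremonaProof in
/-- If a simple connected matroid of rank `d+1 ≥ 3` has two different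
Cremona bases `b` and `b*`, there is an involutive matroid automorphism mapping
`b` to `b*`. -/
theorem stmt10 (M : Matroid α) (hfin : M.E.Finite) (hsimple : MSimple M)
    (hconn : MConnected M) (d : ℕ) (hd : 2 ≤ d) (hrk : mRank M M.E = d + 1)
    (b bs : Set α) (hb : IsCremonaBasis M b) (hbs : IsCremonaBasis M bs) (hne : b ≠ bs) :
    ∃ φ : α → α,
      Set.BijOn φ M.E M.E ∧
      (∀ x ∈ M.E, φ (φ x) = x) ∧
      (∀ I, I ⊆ M.E → (M.Indep I ↔ M.Indep (φ '' I))) ∧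
      φ '' b = bs := by
  have hcard3 : 3 ≤ b.ncard := by
    have := mrank_base hfin hb.1
    omega
  obtain ⟨φ, hc⟩ := ctx_exists hfin hsimple hconn hb hbs hcard3
  refine ⟨φ, ⟨fun e he => hc.hmem e he, ?_, ?_⟩, hc.hinv, ?_, ?_⟩
  · exact hc.injOn
  · intro e he
    exact ⟨φ e, hc.hmem e he, hc.hinv e he⟩
  · intro I hIE
    constructor
    · exact fun h => indep_image hc h
    · intro h
      have h2 := indep_image hc h
      rwa [hc.image_image hIE] at h2
  · refine subset_antisymm ?_ ?_
    · rintro t ⟨u, hu, rfl⟩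
      exact hc.mapb u hu
    · intro w hw
      refine ⟨φ w, hc.mapbs w hw, hc.hinv w (hbs.1.subset_ground hw)⟩
end
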